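/- arXiv:2605.03151 — 2 statements merged into one kernel-verified Lean document; each statement's English description precedes it below -/
import Mathlib

section
/- Let (X_n)_{n≥1} be a sequence of random finite d-dimensional simplicial complexes with s_{d−1}(X_n) → ∞, converging locally weakly in probability to (X, o) with law μ. Set ζ := μ( s_{d−1}(C(o)) = ∞ ), the survival probability of the d-dimensional connected component of the root. Then for every ε > 0, P( s_{d−1}(C_max) ≤ s_{d−1}(X_n)·(ζ + ε) ) → 1 as n → ∞. -/
open MeasureTheory Filter Finset Asymptotics
open scoped ENNReal NNReal Classical

namespace RSC

/-- An abstract simplicial complex on a vertex type `V`: a collection of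
nonempty finite sets closed under taking nonempty subsets. -/
structure SComplex (V : Type*) where
  faces : Set (Finset V)
  nonempty_of_mem : ∀ σ ∈ faces, σ.Nonempty
  down_closed : ∀ σ ∈ faces, ∀ τ : Finset V, τ ⊆ σ → τ.Nonempty → τ ∈ faces

variable {V W : Type*}

/-- The set of `k`-dimensional simplices (sets of cardinality `k+1`). -/
def simplices (X : SComplex V) (k : ℕ) : Set (Finset V) :=
  {σ | σ ∈ X.faces ∧ σ.card = k + 1}

/-- `s_k(X)`, the number of `k`-dimensional simplices. -/
noncomputable def scount (X : SComplex V) (k : ℕ) : ℕ :=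
  (simplices X k).ncard

/-- Two `(d-1)`-simplices are adjacent if some `d`-simplex contains both. -/
def Adj (X : SComplex V) (d : ℕ) (σ σ' : Finset V) : Prop :=
  σ ∈ simplices X (d - 1) ∧ σ' ∈ simplices X (d - 1) ∧
    ∃ τ ∈ simplices X d, σ ⊆ τ ∧ σ' ⊆ τ

/-- `d`-dimensional connectivity of `(d-1)`-simplices (connection through
`d`-dimensional paths). -/
def Conn (X : SComplex V) (d : ℕ) (σ σ' : Finset V) : Prop :=
  σ ∈ simplices X (d - 1) ∧ σ' ∈ simplices X (d - 1) ∧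
    Relation.ReflTransGen (Adj X d) σ σ'

/-- The `d`-dimensional connected component of a `(d-1)`-simplex, as the set of
`(d-1)`-simplices connected to it. -/
def component (X : SComplex V) (d : ℕ) (σ : Finset V) : Set (Finset V) :=
  {σ' | Conn X d σ σ'}

/-- The collection of `d`-dimensional connected components. -/
def components (X : SComplex V) (d : ℕ) : Set (Set (Finset V)) :=
  {C | ∃ σ ∈ simplices X (d - 1), C = component X d σ}

/-- `s_{d-1}(C_max)`: the number of `(d-1)`-simplices of the largest
`d`-dimensional connected component. -/
noncomputable def maxCompCard (X : SComplex V) (d : ℕ) : ℕ :=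
  sSup (Set.ncard '' components X d)

/-- `s_{d-1}(C_(2))`: the number of `(d-1)`-simplices of the second largest
`d`-dimensional connected component. -/
noncomputable def secondCompCard (X : SComplex V) (d : ℕ) : ℕ :=
  sSup {m | ∃ C₁ ∈ components X d, ∃ C₂ ∈ components X d,
    C₁ ≠ C₂ ∧ m = min C₁.ncard C₂.ncard}

/-- `C` is a largest `d`-dimensional connected component. -/
def IsMaxComponent (X : SComplex V) (d : ℕ) (C : Set (Finset V)) : Prop :=
  C ∈ components X d ∧ ∀ C' ∈ components X d, C'.ncard ≤ C.ncard

/-- `C` is a second largest `d`-dimensional connected component (with respect to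
some choice of a largest component, ties broken arbitrarily). -/
def IsSecondComponent (X : SComplex V) (d : ℕ) (C : Set (Finset V)) : Prop :=
  ∃ C₀, IsMaxComponent X d C₀ ∧ C ∈ components X d ∧ C ≠ C₀ ∧
    ∀ C' ∈ components X d, C' ≠ C₀ → C'.ncard ≤ C.ncard

/-- `s_0(C)`: the number of vertices contained in simplices of a component `C`. -/
noncomputable def vertexCard (C : Set (Finset V)) : ℕ :=
  (⋃ σ ∈ C, (σ : Set V)).ncard

/-! ### Neighborhoods -/

/-- The faces of the radius-`r` neighborhood of a `(d-1)`-simplex `σ₀`,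
with respect to `d`-dimensional adjacency. -/
def ballFaces (X : SComplex V) (d : ℕ) (σ₀ : Finset V) : ℕ → Set (Finset V)
  | 0 => {ρ | ρ ⊆ σ₀ ∧ ρ.Nonempty}
  | r + 1 => ballFaces X d σ₀ r ∪
      {ρ | ρ.Nonempty ∧ ∃ τ ∈ simplices X d,
        (∃ σ ∈ simplices X (d - 1), σ ∈ ballFaces X d σ₀ r ∧ σ ⊆ τ) ∧ ρ ⊆ τ}

lemma ballFaces_down (X : SComplex V) (d : ℕ) (σ₀ : Finset V) :
    ∀ r, ∀ ρ ∈ ballFaces X d σ₀ r, ∀ π : Finset V, π ⊆ ρ → π.Nonempty →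
      π ∈ ballFaces X d σ₀ r := by
  intro r
  induction r with
  | zero =>
    rintro ρ ⟨h1, -⟩ π hsub hne
    exact ⟨hsub.trans h1, hne⟩
  | succ r ih =>
    rintro ρ (h | ⟨-, τ, hτ, hσ, hρτ⟩) π hsub hne
    · exact Or.inl (ih ρ h π hsub hne)
    · exact Or.inr ⟨hne, τ, hτ, hσ, hsub.trans hρτ⟩

/-- The radius-`r` neighborhood `B_X(σ₀; r)` of a `(d-1)`-simplex `σ₀`,
as a simplicial complex. -/
def ball (X : SComplex V) (d : ℕ) (σ₀ : Finset V) (r : ℕ) : SComplex V where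
  faces := X.faces ∩ ballFaces X d σ₀ r
  nonempty_of_mem := fun σ h => X.nonempty_of_mem σ h.1
  down_closed := fun σ h τ hsub hne =>
    ⟨X.down_closed σ h.1 τ hsub hne, ballFaces_down X d σ₀ r σ h.2 τ hsub hne⟩

/-! ### Rooted complexes and isomorphisms -/

/-- A rooted simplicial complex. -/
structure Rooted (V : Type*) where
  cplx : SComplex V
  root : Finset V

/-- Isomorphism of rooted simplicial complexes: a bijection of vertex sets
preserving all simplices and mapping root to root. -/
def Iso (A : Rooted V) (B : Rooted W) : Prop :=
  ∃ φ : V → W, Set.InjOn φ {v | ({v} : Finset V) ∈ A.cplx.faces} ∧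
    (∀ σ ∈ A.cplx.faces, σ.image φ ∈ B.cplx.faces) ∧
    (∀ τ ∈ B.cplx.faces, ∃ σ ∈ A.cplx.faces, σ.image φ = τ) ∧
    A.root.image φ = B.root

/-- The rooted radius-`r` neighborhood of the root of a rooted complex. -/
def ballOf (A : Rooted V) (d : ℕ) (r : ℕ) : Rooted V :=
  ⟨ball A.cplx d A.root r, A.root⟩

/-! ### Local weak convergence in probability -/

/-- Local weak convergence in probability of a sequence of random finite
`d`-dimensional simplicial complexes to a random `(d-1)`-rooted simplicial
complex `Y` defined on a probability space `(Ω', ν)`. -/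
def ConvLWCinP {Ω : ℕ → Type*} [∀ n, MeasurableSpace (Ω n)]
    (μ : ∀ n, Measure (Ω n)) {Vn : ℕ → Type*}
    (X : ∀ n, Ω n → SComplex (Vn n)) (d : ℕ)
    {Ω' : Type*} [MeasurableSpace Ω'] (ν : Measure Ω') (Y : Ω' → Rooted ℕ) : Prop :=
  ∀ (r : ℕ) (H : Rooted ℕ), ∀ ε > (0 : ℝ),
    Tendsto (fun n => ((μ n) {ω |
        ε < |(Set.ncard {σ | σ ∈ simplices (X n ω) (d - 1) ∧
                Iso (ballOf ⟨X n ω, σ⟩ d r) H} : ℝ) / (scount (X n ω) (d - 1) : ℝ)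
              - (ν {ω' | Iso (ballOf (Y ω') d r) H}).toReal|}).toReal)
      atTop (nhds 0)

/-! ### The multi-parameter random simplicial complex -/

/-- Bernoulli measure with success probability `p` on `Bool`. -/
noncomputable def bern (p : ℝ) : Measure Bool :=
  (PMF.bernoulli (min (Real.toNNReal p) 1) (min_le_right _ _)).toMeasure

instance (p : ℝ) : IsProbabilityMeasure (bern p) :=
  PMF.toMeasure.isProbabilityMeasure _

/-- The law of the independent coins deciding the presence of simplices:
the coin of a potential `k`-dimensional simplex `σ` (with `σ.card = k+1`)
has success probability `p k`. -/
noncomputable def coinMeasure (n : ℕ) (p : ℕ → ℝ) :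
    Measure (Finset (Fin n) → Bool) :=
  Measure.pi fun σ => bern (p (σ.card - 1))

instance (n : ℕ) (p : ℕ → ℝ) : IsProbabilityMeasure (coinMeasure n p) := by
  unfold coinMeasure; infer_instance

/-- The multi-parameter random simplicial complex `MRSC_d(n; p)` built from
the independent coins `ω`: a simplex of dimension `≤ d` is present iff the
coins of all its faces of dimension `≥ 1` are successes. -/
noncomputable def mrscComplex (d n : ℕ) (ω : Finset (Fin n) → Bool) :
    SComplex (Fin n) where
  faces := {σ | σ.Nonempty ∧ σ.card ≤ d + 1 ∧ ∀ τ ⊆ σ, 2 ≤ τ.card → ω τ = true}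
  nonempty_of_mem := fun _ h => h.1
  down_closed := fun _ h _ hsub hne =>
    ⟨hne, le_trans (Finset.card_le_card hsub) h.2.1,
      fun ρ hρ h2 => h.2.2 ρ (hρ.trans hsub) h2⟩

/-- Parameters of the Linial–Meshulam complex `LM_d(n, lam/n)` seen as a
multi-parameter random simplicial complex. -/
noncomputable def lmParam (d : ℕ) (lam : ℝ) (n : ℕ) : ℕ → ℝ :=
  fun k => if k = d then lam / n else 1

/-- Parameters of `MRSC_2(n; p₁, p₂)`. -/
noncomputable def mrsc2Param (p₁ p₂ : ℕ → ℝ) (n : ℕ) : ℕ → ℝ :=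
  fun k => if k = 1 then p₁ n else if k = 2 then p₂ n else 1

/-- `q_d`, the probability that a fixed `(d-1)`-simplex is present. -/
noncomputable def qParam (d : ℕ) (p : ℕ → ℝ) : ℝ :=
  ∏ k ∈ Finset.Icc 1 (d - 1), p k ^ d.choose (k + 1)

/-- `r_d`, the conditional probability that a fixed `d`-simplex containing a
present `(d-1)`-simplex is present. -/
noncomputable def rParam (d : ℕ) (p : ℕ → ℝ) : ℝ :=
  ∏ k ∈ Finset.Icc 1 d, p k ^ d.choose k

/-- Conditional probability `P(A | B)`. -/
noncomputable def condProb {Ω : Type*} [MeasurableSpace Ω]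
    (μ : Measure Ω) (A B : Set Ω) : ℝ :=
  (μ (A ∩ B)).toReal / (μ B).toReal

/-- `I_lam = lam - 1 - log lam`, the large deviation rate function of the
Poisson distribution. -/
noncomputable def Ifun (lam : ℝ) : ℝ := lam - 1 - Real.log lam

/-- `γ_lam`: the smallest solution in `[0,1]` of `γ = exp (-lam (1 - γ^d))`,
i.e. the extinction probability of a branching process with offspring
distribution `d · Poi(lam)`. -/
noncomputable def gammaLam (d : ℕ) (lam : ℝ) : ℝ :=
  sInf {γ : ℝ | γ ∈ Set.Icc (0 : ℝ) 1 ∧ γ = Real.exp (-lam * (1 - γ ^ d))}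


/-! ### Breadth-first exploration -/

/-- Insert an element into a list sorted according to `key`. -/
def insertKey {α : Type*} (key : α → ℕ) (a : α) : List α → List α
  | [] => [a]
  | b :: t => if key a ≤ key b then a :: b :: t else b :: insertKey key a t

/-- Sort a list according to an injective key (a fixed linear order). -/
def sortByKey {α : Type*} (key : α → ℕ) (l : List α) : List α :=
  l.foldr (insertKey key) []

/-- One step of the breadth-first exploration of a `d`-dimensional connected
component.  A state consists of the set of faces discovered so far together
with the queue of active `(d-1)`-simplices; at each step the first active
`(d-1)`-simplex is explored: all new `d`-simplices containing it (and whose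
new vertices avoid `avoid`) are detected, their faces are added to the
discovered set, and the newly detected `(d-1)`-simplices are appended
(in the fixed linear order given by `key`) to the queue. -/
noncomputable def exploreStep [Fintype V] [DecidableEq V] (key : Finset V → ℕ)
    (X : SComplex V) (d : ℕ) (avoid : Set V) :
    Set (Finset V) × List (Finset V) → Set (Finset V) × List (Finset V)
  | (vis, []) => (vis, [])
  | (vis, σ :: rest) =>
    let newTri : Set (Finset V) :=
      {τ | τ ∈ X.faces ∧ τ.card = d + 1 ∧ σ ⊆ τ ∧ τ ∉ vis ∧
        ∀ v ∈ τ, v ∉ σ → v ∉ avoid}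
    let vis' := vis ∪ {ρ | ρ.Nonempty ∧ ∃ τ ∈ newTri, ρ ⊆ τ}
    let newAct : Finset (Finset V) :=
      Finset.univ.filter fun σ' => σ'.card = d ∧ σ' ∉ vis ∧ ∃ τ ∈ newTri, σ' ⊆ τ
    (vis', rest ++ sortByKey key newAct.toList)

/-- The breadth-first exploration started from a given initial state. -/
noncomputable def exploreFrom [Fintype V] [DecidableEq V] (key : Finset V → ℕ)
    (X : SComplex V) (d : ℕ) (avoid : Set V)
    (init : Set (Finset V) × List (Finset V)) (k : ℕ) :
    Set (Finset V) × List (Finset V) :=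
  (exploreStep key X d avoid)^[k] init

/-- The breadth-first exploration of the `d`-dimensional connected component of
the `(d-1)`-simplex `σ₀`; `(explore key X d σ₀ k).1` is the complex `𝒳_k`
discovered after `k` steps and `(explore key X d σ₀ k).2` is the queue of
active `(d-1)`-simplices. -/
noncomputable def explore [Fintype V] [DecidableEq V] (key : Finset V → ℕ)
    (X : SComplex V) (d : ℕ) (σ₀ : Finset V) (k : ℕ) :
    Set (Finset V) × List (Finset V) :=
  exploreFrom key X d ∅ ({ρ | ρ ⊆ σ₀ ∧ ρ.Nonempty}, [σ₀]) k

/-- Number of edges (`(d-1)=1`-simplices when `d = 2`) in the ball `B_X(σ; r)`;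
more generally the number of `(d-1)`-simplices. -/
noncomputable def ballEdgeCount (X : SComplex V) (d : ℕ) (σ : Finset V) (r : ℕ) : ℕ :=
  Set.ncard {τ | τ ∈ (ball X d σ r).faces ∧ τ.card = d}

/-- Number of `(d-1)`-simplices in the boundary `∂B_X(σ; r)`. -/
noncomputable def bdryEdgeCount (X : SComplex V) (d : ℕ) (σ : Finset V) (r : ℕ) : ℕ :=
  Set.ncard {τ | τ ∈ (ball X d σ r).faces ∧ τ.card = d ∧
    τ ∉ (ball X d σ (r - 1)).faces}

/-- The vertex set of the ball `B_X(σ; r)`. -/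
def ballVerts (X : SComplex V) (d : ℕ) (σ : Finset V) (r : ℕ) : Set V :=
  {v | ({v} : Finset V) ∈ (ball X d σ r).faces}

/-- The breadth-first exploration started from the ball `B_X(σ₀; r)` fully
explored, with the `(d-1)`-simplices of its boundary active, avoiding the
vertex set `avoid`. -/
noncomputable def exploreBall [Fintype V] [DecidableEq V] (key : Finset V → ℕ)
    (X : SComplex V) (d : ℕ) (avoid : Set V) (σ₀ : Finset V) (r k : ℕ) :
    Set (Finset V) × List (Finset V) :=
  exploreFrom key X d avoid
    ((ball X d σ₀ r).faces,
      sortByKey key ((Finset.univ.filter fun τ : Finset V =>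
        τ.card = d ∧ τ ∈ (ball X d σ₀ r).faces ∧
          τ ∉ (ball X d σ₀ (r - 1)).faces).toList)) k

/-- `deg_{c-1, m}^T (ρ)`: the number of `m`-dimensional simplices
(sets of cardinality `m+1`) in the collection `T` containing `ρ`. -/
noncomputable def degIn (T : Set (Finset V)) (ρ : Finset V) (m : ℕ) : ℕ :=
  Set.ncard {τ | τ ∈ T ∧ τ.card = m + 1 ∧ ρ ⊆ τ}

/-- `max_{ρ ∈ S_{c-1}(T)} deg_{c-1, m}^T (ρ)`. -/
noncomputable def maxDegIn (T : Set (Finset V)) (c m : ℕ) : ℕ :=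
  sSup ((fun ρ => degIn T ρ m) '' {ρ | ρ ∈ T ∧ ρ.card = c})

/-- `s_0(T)`: the number of vertices of the collection of faces `T`. -/
noncomputable def vertsOf (T : Set (Finset V)) : ℕ :=
  Set.ncard {v : V | ({v} : Finset V) ∈ T}

/-- The canonical face `{0, …, c-1}` in `Fin n`. -/
def canonFace (n c : ℕ) : Finset (Fin n) :=
  Finset.univ.filter fun i => (i : ℕ) < c

/-- The canonical `ℓ`-dimensional face `{0, …, ℓ-1, d}` in `Fin n`;
it is contained in the canonical `d`-simplex but not in the canonical
`(d-1)`-simplex. -/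
def canonRho (n ℓ d : ℕ) : Finset (Fin n) :=
  Finset.univ.filter fun i => (i : ℕ) < ℓ ∨ (i : ℕ) = d

/-- `p_{d,ℓ} = P(τ ∈ X_n | σ, ρ ∈ X_n)` for simplices `τ, σ, ρ` of dimensions
`d`, `d-1` and `ℓ` respectively with `σ, ρ ⊆ τ` and `ρ ⊄ σ`. -/
noncomputable def pdl (d n : ℕ) (p : ℕ → ℝ) (ℓ : ℕ) : ℝ :=
  condProb (coinMeasure n p)
    {ω | canonFace n (d + 1) ∈ (mrscComplex d n ω).faces}
    {ω | canonFace n d ∈ (mrscComplex d n ω).faces ∧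
         canonRho n ℓ d ∈ (mrscComplex d n ω).faces}

/-- The quantity `p_k^F` of Lemma 3.2 (forward estimate), with `e` the `o(1)`
error term. -/
noncomputable def pkFval (d n : ℕ) (p : ℕ → ℝ) (lam e : ℝ) (k : ℕ)
    (T : Set (Finset (Fin n))) (σk : Finset (Fin n)) : ℝ :=
  (1 - ((k : ℝ) - 1) * lam / n -
      ∑ ℓ ∈ Finset.Icc 1 (d - 1),
        ∑ ρ ∈ σk.powerset.filter (fun ρ => ρ.card = ℓ),
          (degIn T ρ (d - 1) : ℝ) * pdl d n p ℓ) * (lam / n + e)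

/-- The quantity `p_k^B` of Lemma 3.3 (backward estimate), with `e` the `o(1)`
error term. -/
noncomputable def pkBval (d n : ℕ) (p : ℕ → ℝ) (lam e : ℝ)
    (T : Set (Finset (Fin n))) (σk : Finset (Fin n)) : ℝ :=
  (1 - ∑ ℓ ∈ Finset.Icc 1 (d - 1),
        ∑ ρ ∈ σk.powerset.filter (fun ρ => ρ.card = ℓ),
          (degIn T ρ (d - 1) : ℝ) * pdl d n p ℓ) * (lam / n + e)

/-- `F_k`: `d` times the number of forward `d`-simplices detected when
exploring `σk` from the state with discovered faces `T`, i.e. the number of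
new forward `(d-1)`-simplices. -/
noncomputable def forwardCount (d n : ℕ) (Xc : SComplex (Fin n))
    (T : Set (Finset (Fin n))) (σk : Finset (Fin n)) : ℕ :=
  d * Set.ncard {v : Fin n | ({v} : Finset (Fin n)) ∉ T ∧
    insert v σk ∈ Xc.faces}

/-- `B_k`: `d` times the number of backward `d`-simplices detected when
exploring `σk` from the state with discovered faces `T`, i.e. the number of
new backward `(d-1)`-simplices. -/
noncomputable def backwardCount (d n : ℕ) (Xc : SComplex (Fin n))
    (T : Set (Finset (Fin n))) (σk : Finset (Fin n)) : ℕ :=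
  d * Set.ncard {v : Fin n | ({v} : Finset (Fin n)) ∈ T ∧ v ∉ σk ∧
    (∀ ρ : Finset (Fin n), ρ ⊆ insert v σk → ρ.card = d → v ∈ ρ → ρ ∉ T) ∧
    insert v σk ∈ Xc.faces}

/-- The probability `P(Bin(m, q) = j)`. -/
noncomputable def binomPMF (m : ℕ) (q : ℝ) (j : ℕ) : ℝ :=
  m.choose j * q ^ j * (1 - q) ^ (m - j)

/-- The upper tail `P(d · Bin(m, q) ≥ t)` of `d` times a binomial random
variable. -/
noncomputable def scaledBinomTail (d m : ℕ) (q : ℝ) (t : ℕ) : ℝ :=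
  ∑ j ∈ Finset.range (m + 1), if t ≤ d * j then binomPMF m q j else 0

/-! ### The `(d-1)`-rooted Poisson tree and Galton–Watson trees -/

/-- The fresh vertex attached to the tree node encoded by `l`. -/
def apex (d : ℕ) (l : List ℕ) : ℕ := d + Encodable.encode l

/-- The `(d-1)`-simplex of the node of the `(d-1)`-rooted tree indexed by
the path `l` (most recent step first): the root is `{0, …, d-1}` and the node
`c :: l` is obtained from the node `l` by attaching the fresh vertex
`apex d (c / d :: l)` of its `(c / d)`-th child `d`-simplex and removing its
`(c % d)`-th smallest vertex. -/
def nodeSimplex (d : ℕ) : List ℕ → Finset ℕ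
  | [] => Finset.range d
  | c :: l =>
    ((nodeSimplex d l).erase (((nodeSimplex d l).sort (· ≤ ·)).getD (c % d) 0))
      ∪ {apex d (c / d :: l)}

/-- Which nodes are present, given the number `N l` of child `d`-simplices of
every node `l`: each child `d`-simplex carries `d` child `(d-1)`-simplices. -/
def nodePresent (d : ℕ) (N : List ℕ → ℕ) : List ℕ → Prop
  | [] => True
  | c :: l => nodePresent d N l ∧ c < d * N l

/-- The `(d-1)`-rooted tree complex built from the family of offspring numbers
`N`: when every `N l` is an independent `Poisson(lam)` random variable this is
the `(d-1)`-rooted Poisson tree with parameter `lam`. -/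
def poissonTreeComplex (d : ℕ) (N : List ℕ → ℕ) : SComplex ℕ where
  faces := {ρ | ρ.Nonempty ∧ (ρ ⊆ Finset.range d ∨
    ∃ l i, nodePresent d N l ∧ i < N l ∧
      ρ ⊆ nodeSimplex d l ∪ {apex d (i :: l)})}
  nonempty_of_mem := fun _ h => h.1
  down_closed := by
    rintro σ ⟨h1, h2⟩ τ hsub hne
    refine ⟨hne, ?_⟩
    rcases h2 with h | ⟨l, i, h3, h4, h5⟩
    · exact Or.inl (hsub.trans h)
    · exact Or.inr ⟨l, i, h3, h4, hsub.trans h5⟩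

/-- The `(d-1)`-rooted Poisson tree (as a rooted complex) built from the
offspring numbers `N`. -/
def poissonTreeRooted (d : ℕ) (N : List ℕ → ℕ) : Rooted ℕ :=
  ⟨poissonTreeComplex d N, Finset.range d⟩

/-- The Poisson probability mass function `e^{-lam} lam^m / m!`. -/
noncomputable def poiPMF (lam : ℝ) (m : ℕ) : ℝ :=
  Real.exp (-lam) * lam ^ m / (Nat.factorial m)

/-- The probability mass function of `d` times a `Poisson(lam)` random
variable. -/
noncomputable def dPoiPMF (d : ℕ) (lam : ℝ) (m : ℕ) : ℝ :=
  if d ∣ m then Real.exp (-lam) * lam ^ (m / d) / (Nat.factorial (m / d)) else 0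

/-- The family tree of a Galton–Watson branching process whose individuals `l`
have `N l` children: the set of individuals ever produced. -/
def gwTree (N : List ℕ → ℕ) : Set (List ℕ) :=
  {l | nodePresent 1 N l}

/-- The restricted generating function
`G(z) = E[z^C · 1_{C < ∞}]` of the total progeny `C` of the Galton–Watson
process with offspring numbers `N`. -/
noncomputable def gwGen {Ω : Type*} [MeasurableSpace Ω] (μ : Measure Ω)
    (N : Ω → List ℕ → ℕ) (z : ℝ) : ℝ :=
  ∫ ω, (if (gwTree (N ω)).Finite then z ^ (gwTree (N ω)).ncard else 0) ∂μ

/-- `1 / s_{d-1}(C(o))` for a rooted complex, with the convention that it is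
`0` for an infinite component. -/
noncomputable def invCompCard (d : ℕ) (A : Rooted ℕ) : ℝ :=
  if (component A.cplx d A.root).Finite then
    1 / ((component A.cplx d A.root).ncard : ℝ) else 0

/-! ### The metric space of rooted complexes -/

/-- `X` is locally finite above dimension `d-1`: every simplex of dimension
`≥ d-1` (cardinality `≥ d`) is contained in finitely many simplices of the
next dimension. -/
def LocallyFinite (X : SComplex V) (d : ℕ) : Prop :=
  ∀ σ ∈ X.faces, d ≤ σ.card →
    {τ | τ ∈ X.faces ∧ σ ⊆ τ ∧ τ.card = σ.card + 1}.Finite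

/-- `X` is `d`-dimensionally connected: every pair of `(d-1)`-simplices is
joined by a `d`-dimensional path, and every face is contained in some
`(d-1)`-simplex. -/
def DConnected (X : SComplex V) (d : ℕ) : Prop :=
  (∀ σ ∈ simplices X (d - 1), ∀ σ' ∈ simplices X (d - 1), Conn X d σ σ') ∧
    ∀ ρ ∈ X.faces, ∃ σ ∈ simplices X (d - 1), ρ ⊆ σ

/-- A member of the space `S_{d-1}`: a `(d-1)`-rooted, `d`-dimensionally
connected simplicial complex that is locally finite above dimension `d-1`. -/
def GoodRooted (d : ℕ) (A : Rooted ℕ) : Prop :=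
  A.root ∈ simplices A.cplx (d - 1) ∧ LocallyFinite A.cplx d ∧
    DConnected A.cplx d

/-- The local distance `1 / (1 + R*)` on rooted simplicial complexes, where
`R* = sup {R | B(σ₁; R) ≅ B(σ₂; R)}` (the distance being `0` if all
neighborhoods are isomorphic). -/
noncomputable def rdist (d : ℕ) (A B : Rooted ℕ) : ℝ :=
  if ∀ R : ℕ, Iso (ballOf A d R) (ballOf B d R) then 0
  else
    1 / (1 + ((sSup {R : ℕ | Iso (ballOf A d R) (ballOf B d R)} : ℕ) : ℝ))


/-! ### Auxiliary material for Statement 4 -/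


lemma SComplex.mem_of_mem_face (X : SComplex V) {σ : Finset V} (hσ : σ ∈ X.faces)
    {v : V} (hv : v ∈ σ) : ({v} : Finset V) ∈ X.faces :=
  X.down_closed σ hσ {v} (Finset.singleton_subset_iff.2 hv) (Finset.singleton_nonempty v)

/-- The vertex set of a complex. -/
def cverts (X : SComplex V) : Set V := {v | ({v} : Finset V) ∈ X.faces}

lemma face_coe_subset_cverts (X : SComplex V) {σ : Finset V} (hσ : σ ∈ X.faces) :
    ↑σ ⊆ cverts X := fun _ hv => X.mem_of_mem_face hσ hv

lemma Adj.symm' {X : SComplex V} {d : ℕ} {σ σ' : Finset V} (h : Adj X d σ σ') :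
    Adj X d σ' σ :=
  ⟨h.2.1, h.1, h.2.2.imp fun _ hτ => ⟨hτ.1, hτ.2.2, hτ.2.1⟩⟩

lemma conn_refl {X : SComplex V} {d : ℕ} {σ : Finset V} (h : σ ∈ simplices X (d - 1)) :
    Conn X d σ σ := ⟨h, h, .refl⟩

lemma conn_trans {X : SComplex V} {d : ℕ} {σ₁ σ₂ σ₃ : Finset V}
    (h : Conn X d σ₁ σ₂) (h' : Conn X d σ₂ σ₃) : Conn X d σ₁ σ₃ :=
  ⟨h.1, h'.2.1, h.2.2.trans h'.2.2⟩

lemma conn_symm {X : SComplex V} {d : ℕ} {σ₁ σ₂ : Finset V} (h : Conn X d σ₁ σ₂) :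
    Conn X d σ₂ σ₁ :=
  ⟨h.2.1, h.1, (@Relation.ReflTransGen.symmetric _ _ ⟨fun _ _ hh => hh.symm'⟩).symm _ _ h.2.2⟩

lemma mem_component_self {X : SComplex V} {d : ℕ} {σ : Finset V}
    (h : σ ∈ simplices X (d - 1)) : σ ∈ component X d σ := conn_refl h

lemma component_subset_simplices (X : SComplex V) (d : ℕ) (σ : Finset V) :
    component X d σ ⊆ simplices X (d - 1) := fun _ h => h.2.1

lemma component_eq_of_mem {X : SComplex V} {d : ℕ} {σ σ' : Finset V}
    (h : σ' ∈ component X d σ) : component X d σ' = component X d σ := by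
  ext τ
  exact ⟨fun hh => conn_trans h hh, fun hh => conn_trans (conn_symm h) hh⟩

lemma ballFaces_subset_succ (X : SComplex V) (d : ℕ) (σ₀ : Finset V) (r : ℕ) :
    ballFaces X d σ₀ r ⊆ ballFaces X d σ₀ (r + 1) := fun _ h => Or.inl h

lemma ballFaces_mono (X : SComplex V) (d : ℕ) (σ₀ : Finset V) {r r' : ℕ} (h : r ≤ r') :
    ballFaces X d σ₀ r ⊆ ballFaces X d σ₀ r' := by
  induction h with
  | refl => exact subset_rfl
  | step _ ih => exact fun ρ hρ => ballFaces_subset_succ _ _ _ _ (ih hρ)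

lemma ball_faces_subset (X : SComplex V) (d : ℕ) (σ₀ : Finset V) (r : ℕ) :
    (ball X d σ₀ r).faces ⊆ X.faces := fun _ h => h.1

lemma ball_faces_mono (X : SComplex V) (d : ℕ) (σ₀ : Finset V) {r r' : ℕ} (h : r ≤ r') :
    (ball X d σ₀ r).faces ⊆ (ball X d σ₀ r').faces :=
  fun ρ hρ => ⟨hρ.1, ballFaces_mono X d σ₀ h hρ.2⟩

lemma root_mem_ball_faces {X : SComplex V} {d : ℕ} {σ₀ : Finset V}
    (h : σ₀ ∈ X.faces) (r : ℕ) : σ₀ ∈ (ball X d σ₀ r).faces :=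
  ⟨h, ballFaces_mono X d σ₀ (Nat.zero_le r)
    ⟨subset_rfl, X.nonempty_of_mem σ₀ h⟩⟩

/-- The `(d-1)`-simplices of the radius-`r` ball. -/
def dBd (X : SComplex V) (d : ℕ) (σ₀ : Finset V) (r : ℕ) : Set (Finset V) :=
  {τ | τ ∈ (ball X d σ₀ r).faces ∧ τ.card = d - 1 + 1}

lemma dBd_mono (X : SComplex V) (d : ℕ) (σ₀ : Finset V) {r r' : ℕ} (h : r ≤ r') :
    dBd X d σ₀ r ⊆ dBd X d σ₀ r' :=
  fun τ hτ => ⟨ball_faces_mono X d σ₀ h hτ.1, hτ.2⟩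

lemma root_mem_dBd {X : SComplex V} {d : ℕ} {σ₀ : Finset V}
    (h : σ₀ ∈ simplices X (d - 1)) (r : ℕ) : σ₀ ∈ dBd X d σ₀ r :=
  ⟨root_mem_ball_faces h.1 r, h.2⟩

lemma dBd_subset_simplices (X : SComplex V) (d : ℕ) (σ₀ : Finset V) (r : ℕ) :
    dBd X d σ₀ r ⊆ simplices X (d - 1) := fun _ h => ⟨h.1.1, h.2⟩

lemma conn_in_ball {X : SComplex V} {d : ℕ} {σ₀ : Finset V}
    (hσ₀ : σ₀ ∈ simplices X (d - 1)) {K : ℕ} :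
    ∀ {r : ℕ}, r ≤ K → ∀ τ ∈ dBd X d σ₀ r, Conn (ball X d σ₀ K) d σ₀ τ := by
  intro r
  induction r with
  | zero =>
    intro _ τ hτ
    have h0 : τ ∈ ballFaces X d σ₀ 0 := hτ.1.2
    have : τ = σ₀ :=
      Finset.eq_of_subset_of_card_le h0.1 (by rw [hτ.2, hσ₀.2])
    subst this
    exact conn_refl ⟨root_mem_ball_faces hσ₀.1 K, hσ₀.2⟩
  | succ r ih =>
    intro hrK τ hτ
    have hrK' : r ≤ K := Nat.le_of_succ_le hrK
    rcases hτ.1.2 with h | ⟨hne, τ', hτ', ⟨σ'', hσ''s, hσ''b, hσ''sub⟩, hττ'⟩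
    · exact ih hrK' τ ⟨⟨hτ.1.1, h⟩, hτ.2⟩
    · have hσ''dB : σ'' ∈ dBd X d σ₀ r := ⟨⟨hσ''s.1, hσ''b⟩, hσ''s.2⟩
      have hconn := ih hrK' σ'' hσ''dB
      have hτ'ball : τ' ∈ ballFaces X d σ₀ (r + 1) :=
        Or.inr ⟨X.nonempty_of_mem τ' hτ'.1, τ', hτ', ⟨σ'', hσ''s, hσ''b, hσ''sub⟩,
          subset_rfl⟩
      have hτ'K : τ' ∈ ballFaces X d σ₀ K := ballFaces_mono X d σ₀ hrK hτ'ball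
      have hτK : τ ∈ ballFaces X d σ₀ K := ballFaces_mono X d σ₀ hrK hτ.1.2
      have hσ''mem : σ'' ∈ simplices (ball X d σ₀ K) (d - 1) :=
        ⟨⟨hσ''s.1, ballFaces_mono X d σ₀ hrK' hσ''b⟩, hσ''s.2⟩
      have hτmem : τ ∈ simplices (ball X d σ₀ K) (d - 1) := ⟨⟨hτ.1.1, hτK⟩, hτ.2⟩
      refine conn_trans hconn ⟨hσ''mem, hτmem, Relation.ReflTransGen.single ?_⟩
      exact ⟨hσ''mem, hτmem, τ', ⟨⟨hτ'.1, hτ'K⟩, hτ'.2⟩, hσ''sub, hττ'⟩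

lemma adj_ball_le {X : SComplex V} {d : ℕ} {σ₀ : Finset V} {r : ℕ} {σ σ' : Finset V}
    (h : Adj (ball X d σ₀ r) d σ σ') : Adj X d σ σ' := by
  obtain ⟨h1, h2, τ, hτ, hs⟩ := h
  exact ⟨⟨h1.1.1, h1.2⟩, ⟨h2.1.1, h2.2⟩, τ, ⟨hτ.1.1, hτ.2⟩, hs⟩

lemma comp_ball_subset_comp {X : SComplex V} {d : ℕ} {σ₀ : Finset V} {r : ℕ} :
    component (ball X d σ₀ r) d σ₀ ⊆ component X d σ₀ := by
  rintro σ' ⟨h1, h2, hrtg⟩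
  exact ⟨⟨h1.1.1, h1.2⟩, ⟨h2.1.1, h2.2⟩,
    Relation.ReflTransGen.mono (fun _ _ h => adj_ball_le h) _ _ hrtg⟩

lemma dBd_subset_comp {X : SComplex V} {d : ℕ} {σ₀ : Finset V}
    (hσ₀ : σ₀ ∈ simplices X (d - 1)) (r : ℕ) :
    dBd X d σ₀ r ⊆ component X d σ₀ :=
  fun τ hτ => comp_ball_subset_comp (conn_in_ball hσ₀ le_rfl τ hτ)

lemma comp_subset_dBd_of_stab {X : SComplex V} {d : ℕ} {σ₀ : Finset V}
    (hσ₀ : σ₀ ∈ simplices X (d - 1)) {r : ℕ}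
    (hstab : dBd X d σ₀ r = dBd X d σ₀ (r + 1)) :
    component X d σ₀ ⊆ dBd X d σ₀ r := by
  rintro σ' ⟨-, -, hrtg⟩
  induction hrtg with
  | refl => exact root_mem_dBd hσ₀ r
  | tail _ hadj ih =>
    rename_i b c _
    obtain ⟨hb, hc, τ', hτ', hbsub, hcsub⟩ := hadj
    rw [hstab]
    refine ⟨⟨hc.1, Or.inr ⟨X.nonempty_of_mem _ hc.1, τ', hτ', ⟨b, hb, ih.1.2, hbsub⟩,
      hcsub⟩⟩, hc.2⟩

lemma comp_small_of_dBd_small {X : SComplex V} {d : ℕ} {σ₀ : Finset V} {K : ℕ}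
    (hσ₀ : σ₀ ∈ simplices X (d - 1)) (hfinF : (dBd X d σ₀ K).Finite)
    (hlt : (dBd X d σ₀ K).ncard < K) :
    (component X d σ₀).Finite ∧ (component X d σ₀).ncard < K := by
  have hstab : ∃ r, r < K ∧ dBd X d σ₀ r = dBd X d σ₀ (r + 1) := by
    by_contra hcon
    push_neg at hcon
    have key : ∀ r, r ≤ K → r ≤ (dBd X d σ₀ r).ncard := by
      intro r
      induction r with
      | zero => intro _; exact Nat.zero_le _
      | succ r ih =>
        intro hrK
        have hrK' : r < K := Nat.lt_of_succ_le hrK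
        have hne := hcon r hrK'
        have hss : dBd X d σ₀ r ⊂ dBd X d σ₀ (r + 1) :=
          (dBd_mono X d σ₀ (Nat.le_succ r)).ssubset_of_ne hne
        have hfin' : (dBd X d σ₀ (r + 1)).Finite :=
          hfinF.subset (dBd_mono X d σ₀ hrK)
        have := Set.ncard_lt_ncard hss hfin'
        exact Nat.succ_le_of_lt (lt_of_le_of_lt (ih hrK'.le) this)
    have := key K le_rfl
    omega
  obtain ⟨r, hrK, hstab⟩ := hstab
  have hsub : component X d σ₀ ⊆ dBd X d σ₀ K :=
    fun τ hτ => dBd_mono X d σ₀ hrK.le (comp_subset_dBd_of_stab hσ₀ hstab hτ)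
  exact ⟨hfinF.subset hsub, lt_of_le_of_lt (Set.ncard_le_ncard hsub hfinF) hlt⟩


lemma ball_face_cases {X : SComplex V} {d : ℕ} {σ₀ : Finset V} {r : ℕ} :
    ∀ ρ ∈ ballFaces X d σ₀ r, ρ ⊆ σ₀ ∨
      ∃ τ, τ ∈ (ball X d σ₀ r).faces ∧ τ.card = d + 1 ∧ ρ ⊆ τ := by
  induction r with
  | zero => exact fun ρ h => Or.inl h.1
  | succ r ih =>
    rintro ρ (h | ⟨hne, τ', hτ', hex, hρτ'⟩)
    · rcases ih ρ h with h' | ⟨τ, hτ, hcard, hsub⟩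
      · exact Or.inl h'
      · exact Or.inr ⟨τ, ball_faces_mono X d σ₀ (Nat.le_succ r) hτ, hcard, hsub⟩
    · refine Or.inr ⟨τ', ⟨hτ'.1, Or.inr ⟨X.nonempty_of_mem τ' hτ'.1, τ', hτ', hex,
        subset_rfl⟩⟩, hτ'.2, hρτ'⟩

/-- The `d`-simplices of the ball. -/
def dTop (X : SComplex V) (d : ℕ) (σ₀ : Finset V) (r : ℕ) : Set (Finset V) :=
  {τ | τ ∈ (ball X d σ₀ r).faces ∧ τ.card = d + 1}

lemma dTop_witness {X : SComplex V} {d : ℕ} {σ₀ : Finset V} {r : ℕ}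
    (hσ₀ : σ₀ ∈ simplices X (d - 1)) :
    ∀ τ ∈ dTop X d σ₀ r, ∀ v ∈ τ, ∃ ρ ∈ component X d σ₀, ρ ⊆ τ ∧ v ∈ ρ := by
  intro τ hτ v hv
  obtain ⟨ρ, hvρ, hρτ, hcard⟩ :=
    Finset.exists_subsuperset_card_eq (n := d - 1 + 1) (Finset.singleton_subset_iff.2 hv)
      (by simp) (by have h2 := hτ.2; omega)
  have hρfaces : ρ ∈ (ball X d σ₀ r).faces :=
    (ball X d σ₀ r).down_closed τ hτ.1 ρ hρτ (Finset.card_pos.1 (by omega))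
  exact ⟨ρ, dBd_subset_comp hσ₀ r ⟨hρfaces, hcard⟩, hρτ,
    Finset.singleton_subset_iff.1 hvρ⟩

lemma dTop_inj {X : SComplex V} {d : ℕ} {σ₀ : Finset V} {r : ℕ}
    (hσ₀ : σ₀ ∈ simplices X (d - 1)) (hc : (component X d σ₀).Finite) :
    Set.InjOn (fun τ => hc.toFinset.filter (fun ρ => ρ ⊆ τ)) (dTop X d σ₀ r) := by
  intro τ₁ h₁ τ₂ h₂ heq'
  have heq : hc.toFinset.filter (fun ρ => ρ ⊆ τ₁) = hc.toFinset.filter (fun ρ => ρ ⊆ τ₂) := heq'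
  ext v
  constructor
  · intro hv
    obtain ⟨ρ, hρc, hρτ, hvρ⟩ := dTop_witness hσ₀ τ₁ h₁ v hv
    have : ρ ∈ hc.toFinset.filter (fun ρ => ρ ⊆ τ₁) := by
      simp only [Finset.mem_filter, Set.Finite.mem_toFinset]; exact ⟨hρc, hρτ⟩
    rw [heq] at this
    exact (Finset.mem_filter.1 this).2 hvρ
  · intro hv
    obtain ⟨ρ, hρc, hρτ, hvρ⟩ := dTop_witness hσ₀ τ₂ h₂ v hv
    have : ρ ∈ hc.toFinset.filter (fun ρ => ρ ⊆ τ₂) := by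
      simp only [Finset.mem_filter, Set.Finite.mem_toFinset]; exact ⟨hρc, hρτ⟩
    rw [← heq] at this
    exact (Finset.mem_filter.1 this).2 hvρ

lemma dTop_finite {X : SComplex V} {d : ℕ} {σ₀ : Finset V} {r : ℕ}
    (hσ₀ : σ₀ ∈ simplices X (d - 1)) (hc : (component X d σ₀).Finite) :
    (dTop X d σ₀ r).Finite := by
  refine Set.Finite.of_finite_image ?_ (dTop_inj hσ₀ hc)
  refine Set.Finite.subset (hc.toFinset.powerset : Finset _).finite_toSet ?_
  rintro _ ⟨τ, -, rfl⟩
  simp only [Finset.coe_powerset, Set.mem_preimage, Set.mem_powerset_iff,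
    Finset.coe_subset, Finset.mem_coe]
  exact Finset.filter_subset _ _

lemma dTop_ncard {X : SComplex V} {d : ℕ} {σ₀ : Finset V} {r K : ℕ}
    (hσ₀ : σ₀ ∈ simplices X (d - 1)) (hc : (component X d σ₀).Finite)
    (hlt : (component X d σ₀).ncard < K) :
    (dTop X d σ₀ r).ncard ≤ 2 ^ K := by
  have h1 : (dTop X d σ₀ r).ncard ≤ (↑hc.toFinset.powerset : Set (Finset (Finset V))).ncard := by
    refine Set.ncard_le_ncard_of_injOn (fun τ => hc.toFinset.filter (fun ρ => ρ ⊆ τ))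
      (fun τ _ => ?_) (dTop_inj hσ₀ hc) ((hc.toFinset.powerset).finite_toSet)
    simp only [Finset.coe_powerset, Set.mem_preimage, Set.mem_powerset_iff,
      Finset.coe_subset, Finset.mem_coe]
    exact Finset.filter_subset _ _
  rw [Set.ncard_coe_finset, Finset.card_powerset] at h1
  have h2 : hc.toFinset.card = (component X d σ₀).ncard := (Set.ncard_eq_toFinset_card _ _).symm
  refine h1.trans ?_
  rw [h2]
  exact Nat.pow_le_pow_right (by norm_num) hlt.le

lemma ball_faces_finite {X : SComplex V} {d : ℕ} {σ₀ : Finset V} {r : ℕ}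
    (hσ₀ : σ₀ ∈ simplices X (d - 1)) (hc : (component X d σ₀).Finite) :
    (ball X d σ₀ r).faces.Finite := by
  have : (ball X d σ₀ r).faces ⊆
      ↑σ₀.powerset ∪ ⋃ τ ∈ dTop X d σ₀ r, ↑τ.powerset := by
    intro ρ hρ
    rcases ball_face_cases ρ hρ.2 with h | ⟨τ, hτf, hτc, hsub⟩
    · exact Or.inl (by simpa using h)
    · exact Or.inr (Set.mem_biUnion (⟨hτf, hτc⟩ : τ ∈ dTop X d σ₀ r) (by simpa using hsub))
  refine Set.Finite.subset ?_ this
  exact (σ₀.powerset.finite_toSet).union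
    ((dTop_finite hσ₀ hc).biUnion fun τ _ => τ.powerset.finite_toSet)

lemma ball_verts_bound {X : SComplex V} {d : ℕ} {σ₀ : Finset V} {K : ℕ}
    (hσ₀ : σ₀ ∈ simplices X (d - 1)) (hc : (component X d σ₀).Finite)
    (hlt : (component X d σ₀).ncard < K) :
    (cverts (ball X d σ₀ K)).ncard ≤ (d + 1) * (2 ^ K + 1) := by
  classical
  have hTfin := dTop_finite (r := K) hσ₀ hc
  set TBF := hTfin.toFinset with hTBF
  have hsub : cverts (ball X d σ₀ K) ⊆ ↑(σ₀ ∪ TBF.biUnion id) := by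
    intro v hv
    rcases ball_face_cases _ hv.2 with h | ⟨τ, hτf, hτc, hsub⟩
    · simp only [Finset.coe_union, Set.mem_union, Finset.mem_coe]
      exact Or.inl (Finset.singleton_subset_iff.1 h)
    · simp only [Finset.coe_union, Set.mem_union, Finset.mem_coe, Finset.mem_biUnion]
      exact Or.inr ⟨τ, by simp [hTBF, dTop, hτf, hτc], Finset.singleton_subset_iff.1 hsub⟩
  have h1 : (cverts (ball X d σ₀ K)).ncard ≤ (σ₀ ∪ TBF.biUnion id).card := by
    have := Set.ncard_le_ncard hsub (σ₀ ∪ TBF.biUnion id).finite_toSet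
    rwa [Set.ncard_coe_finset] at this
  refine h1.trans ?_
  have h2 : (σ₀ ∪ TBF.biUnion id).card ≤ σ₀.card + (TBF.biUnion id).card :=
    Finset.card_union_le _ _
  have h3 : (TBF.biUnion id).card ≤ ∑ τ ∈ TBF, τ.card := Finset.card_biUnion_le
  have h4 : ∑ τ ∈ TBF, τ.card ≤ TBF.card * (d + 1) := by
    calc ∑ τ ∈ TBF, τ.card ≤ ∑ _τ ∈ TBF, (d + 1) := by
          refine Finset.sum_le_sum fun i hi => ?_
          have : i ∈ dTop X d σ₀ K := by rwa [hTBF, Set.Finite.mem_toFinset] at hi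
          exact this.2.le
      _ = TBF.card * (d + 1) := by rw [Finset.sum_const, smul_eq_mul]
  have h5 : TBF.card ≤ 2 ^ K := by
    have : TBF.card = (dTop X d σ₀ K).ncard := (Set.ncard_eq_toFinset_card _ _).symm
    rw [this]; exact dTop_ncard hσ₀ hc hlt
  have h6 : σ₀.card ≤ d + 1 := by rw [hσ₀.2]; omega
  have h7 : TBF.card * (d + 1) ≤ 2 ^ K * (d + 1) := Nat.mul_le_mul_right _ h5
  have h8 := h3.trans h4
  calc (σ₀ ∪ TBF.biUnion id).card ≤ σ₀.card + (TBF.biUnion id).card := h2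
    _ ≤ (d + 1) + 2 ^ K * (d + 1) := by omega
    _ = (d + 1) * (2 ^ K + 1) := by ring

lemma image_eq_of_image_eq {f : V → W} {s : Set V} (hinj : Set.InjOn f s)
    {σ τ : Finset V} (hσ : ↑σ ⊆ s) (hτ : ↑τ ⊆ s)
    (h : σ.image f = τ.image f) : σ = τ := by
  ext a
  constructor
  · intro ha
    have : f a ∈ τ.image f := by rw [← h]; exact Finset.mem_image_of_mem f ha
    obtain ⟨b, hb, hba⟩ := Finset.mem_image.1 this
    rwa [hinj (hτ hb) (hσ ha) hba] at hb
  · intro ha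
    have : f a ∈ σ.image f := by rw [h]; exact Finset.mem_image_of_mem f ha
    obtain ⟨b, hb, hba⟩ := Finset.mem_image.1 this
    rwa [hinj (hσ hb) (hτ ha) hba] at hb

lemma iso_refl (A : Rooted V) : Iso A A := by
  refine ⟨id, Set.injOn_id _, fun σ hσ => by simpa using hσ,
    fun τ hτ => ⟨τ, hτ, by simp⟩, by simp⟩

lemma iso_trans {U : Type*} {A : Rooted U} {B : Rooted V} {C : Rooted W}
    (h1 : Iso A B) (h2 : Iso B C) : Iso A C := by
  obtain ⟨φ, hinj, hmap, hsurj, hrt⟩ := h1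
  obtain ⟨φ', ginj, gmap, gsurj, grt⟩ := h2
  refine ⟨φ' ∘ φ, ?_, ?_, ?_, ?_⟩
  · intro v hv v' hv' heq
    have h1 : ({φ v} : Finset V) ∈ B.cplx.faces := by
      have := hmap _ hv; rwa [Finset.image_singleton] at this
    have h2 : ({φ v'} : Finset V) ∈ B.cplx.faces := by
      have := hmap _ hv'; rwa [Finset.image_singleton] at this
    exact hinj hv hv' (ginj h1 h2 heq)
  · intro σ hσ
    rw [← Finset.image_image]
    exact gmap _ (hmap _ hσ)
  · intro τ hτ
    obtain ⟨σ', hσ', rfl⟩ := gsurj τ hτ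
    obtain ⟨σ, hσ, rfl⟩ := hsurj σ' hσ'
    exact ⟨σ, hσ, (Finset.image_image).symm⟩
  · rw [← Finset.image_image, hrt, grt]

lemma iso_symm {A : Rooted V} {B : Rooted W} (h : Iso A B)
    (hroot : A.root ∈ A.cplx.faces) : Iso B A := by
  classical
  obtain ⟨φ, hinj, hmap, hsurj, hrt⟩ := h
  have hne : A.root.Nonempty := A.cplx.nonempty_of_mem _ hroot
  obtain ⟨a₀, -⟩ := hne
  set ψ : W → V := fun w =>
    if hw : ∃ v, ({v} : Finset V) ∈ A.cplx.faces ∧ φ v = w then hw.choose else a₀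
    with hψ
  have key1 : ∀ v, ({v} : Finset V) ∈ A.cplx.faces → ψ (φ v) = v := by
    intro v hv
    have hex : ∃ u, ({u} : Finset V) ∈ A.cplx.faces ∧ φ u = φ v := ⟨v, hv, rfl⟩
    rw [hψ]; simp only [dif_pos hex]
    exact hinj hex.choose_spec.1 hv hex.choose_spec.2
  have key2 : ∀ w, ({w} : Finset W) ∈ B.cplx.faces →
      φ (ψ w) = w ∧ ({ψ w} : Finset V) ∈ A.cplx.faces := by
    intro w hw
    obtain ⟨σ, hσ, hσw⟩ := hsurj {w} hw
    obtain ⟨v, hv⟩ := A.cplx.nonempty_of_mem _ hσ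
    have hvf : ({v} : Finset V) ∈ A.cplx.faces := A.cplx.mem_of_mem_face hσ hv
    have hφv : φ v = w := by
      have : φ v ∈ σ.image φ := Finset.mem_image_of_mem φ hv
      rw [hσw] at this
      exact Finset.mem_singleton.1 this
    have hex : ∃ u, ({u} : Finset V) ∈ A.cplx.faces ∧ φ u = w := ⟨v, hvf, hφv⟩
    constructor
    · rw [hψ]; simp only [dif_pos hex]; exact hex.choose_spec.2
    · rw [hψ]; simp only [dif_pos hex]; exact hex.choose_spec.1
  have key3 : ∀ σ ∈ A.cplx.faces, (σ.image φ).image ψ = σ := by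
    intro σ hσ
    rw [Finset.image_image]
    have : σ.image (ψ ∘ φ) = σ.image id := by
      refine Finset.image_congr ?_
      intro v hv
      exact key1 v (A.cplx.mem_of_mem_face hσ hv)
    rw [this, Finset.image_id]
  refine ⟨ψ, ?_, ?_, ?_, ?_⟩
  · intro w hw w' hw' heq
    have h1 := key2 w hw
    have h2 := key2 w' hw'
    rw [← h1.1, ← h2.1, heq]
  · intro τ hτ
    obtain ⟨σ, hσ, rfl⟩ := hsurj τ hτ
    rw [key3 σ hσ]; exact hσ
  · intro σ hσ
    exact ⟨σ.image φ, hmap _ hσ, key3 σ hσ⟩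
  · rw [← hrt, key3 _ hroot]

lemma comp_le_of_iso {d : ℕ} {A : Rooted V} {B : Rooted W} (hAB : Iso A B)
    (hfin : (component B.cplx d B.root).Finite) :
    (component A.cplx d A.root).Finite ∧
      (component A.cplx d A.root).ncard ≤ (component B.cplx d B.root).ncard := by
  obtain ⟨φ, hinj, hmap, hsurj, hrt⟩ := hAB
  have hvert : ∀ σ ∈ A.cplx.faces, ↑σ ⊆ {v | ({v} : Finset V) ∈ A.cplx.faces} :=
    fun σ hσ _ hv => A.cplx.mem_of_mem_face hσ hv
  have step1 : ∀ k, ∀ σ ∈ simplices A.cplx k, σ.image φ ∈ simplices B.cplx k := by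
    intro k σ hσ
    refine ⟨hmap _ hσ.1, ?_⟩
    rw [Finset.card_image_of_injOn (hinj.mono (hvert _ hσ.1))]
    exact hσ.2
  have step2 : ∀ σ σ', Adj A.cplx d σ σ' → Adj B.cplx d (σ.image φ) (σ'.image φ) := by
    intro σ σ' ⟨h1, h2, τ, hτ, hs1, hs2⟩
    exact ⟨step1 _ _ h1, step1 _ _ h2, τ.image φ, step1 _ _ hτ,
      Finset.image_subset_image hs1, Finset.image_subset_image hs2⟩
  have step3 : ∀ σ' ∈ component A.cplx d A.root,
      σ'.image φ ∈ component B.cplx d B.root := by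
    rintro σ' ⟨h1, h2, hrtg⟩
    refine ⟨by rw [← hrt]; exact step1 _ _ h1, step1 _ _ h2, ?_⟩
    rw [← hrt]
    exact Relation.ReflTransGen.lift (fun σ : Finset V => σ.image φ) step2 _ _ hrtg
  have hsub : (fun σ => σ.image φ) '' component A.cplx d A.root ⊆
      component B.cplx d B.root := by
    rintro _ ⟨σ', hσ', rfl⟩; exact step3 σ' hσ'
  have hinj2 : Set.InjOn (fun σ => σ.image φ) (component A.cplx d A.root) := by
    intro σ hσ σ' hσ' heq
    exact image_eq_of_image_eq hinj (hvert _ hσ.2.1.1) (hvert _ hσ'.2.1.1) heq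
  have hfinA : (component A.cplx d A.root).Finite :=
    Set.Finite.of_finite_image (hfin.subset hsub) hinj2
  refine ⟨hfinA, ?_⟩
  rw [← Set.ncard_image_of_injOn hinj2]
  exact Set.ncard_le_ncard hsub hfin
lemma SComplex.faces_ext {X Y : SComplex V} (h : X.faces = Y.faces) : X = Y := by
  cases X; cases Y; congr

lemma Rooted.ext'' {A B : Rooted V} (h1 : A.cplx.faces = B.cplx.faces)
    (h2 : A.root = B.root) : A = B := by
  cases A; cases B
  simp only [Rooted.mk.injEq]
  exact ⟨SComplex.faces_ext h1, h2⟩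

lemma finite_finsets_subset {s : Set V} (hs : s.Finite) :
    {σ : Finset V | ↑σ ⊆ s}.Finite := by
  classical
  refine Set.Finite.subset (hs.toFinset.powerset.finite_toSet) ?_
  intro σ hσ
  simp only [Finset.coe_powerset, Set.mem_preimage, Set.mem_powerset_iff]
  intro x hx
  exact hs.mem_toFinset.2 (hσ hx)

/-- The finite pool of rooted complexes with labels below `m` (roots below `m+1`). -/
def pool (m : ℕ) : Set (Rooted ℕ) :=
  {B | (∀ τ ∈ B.cplx.faces, τ ⊆ Finset.range m) ∧ B.root ⊆ Finset.range (m + 1)}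

lemma pool_finite (m : ℕ) : (pool m).Finite := by
  classical
  have himg : ((fun B : Rooted ℕ => (B.cplx.faces, B.root)) '' pool m).Finite := by
    refine Set.Finite.subset (Set.Finite.prod
      (Set.Finite.finite_subsets
        (finite_finsets_subset (Finset.range m).finite_toSet))
      ((Finset.range (m + 1)).powerset.finite_toSet)) ?_
    rintro _ ⟨B, hB, rfl⟩
    constructor
    · intro τ hτ
      intro x hx
      exact (hB.1 τ hτ) hx
    · simp only [Finset.coe_powerset, Set.mem_preimage, Set.mem_powerset_iff]
      intro x hx
      exact hB.2 hx
  refine Set.Finite.of_finite_image himg ?_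
  intro B _ B' _ heq
  exact Rooted.ext'' (congrArg Prod.fst heq) (congrArg Prod.snd heq)

lemma cverts_finite_of_faces {X : SComplex V} (h : X.faces.Finite) :
    (cverts X).Finite := by
  have : cverts X = (fun v => ({v} : Finset V)) ⁻¹' X.faces := rfl
  rw [this]
  exact h.preimage (fun a _ b _ hab => by simpa using hab)

lemma image_classical_eq {α : Type*} (f : α → ℕ) (σ : Finset α) :
    @Finset.image α ℕ (fun a b => Classical.propDecidable (a = b)) f σ = σ.image f := by
  have h : (fun (a b : ℕ) => Classical.propDecidable (a = b)) = instDecidableEqNat :=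
    Subsingleton.elim _ _
  rw [h]

noncomputable def canonMap (A : Rooted V) (h : (cverts A.cplx).Finite) : V → ℕ :=
  fun v => if hv : v ∈ h.toFinset then
    ((h.toFinset.equivFin ⟨v, hv⟩ : Fin h.toFinset.card) : ℕ) else h.toFinset.card

lemma canonMap_lt {A : Rooted V} {h : (cverts A.cplx).Finite} {v : V}
    (hv : v ∈ cverts A.cplx) : canonMap A h v < h.toFinset.card := by
  have hv' : v ∈ h.toFinset := h.mem_toFinset.2 hv
  rw [canonMap, dif_pos hv']
  exact (h.toFinset.equivFin ⟨v, hv'⟩).isLt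

lemma canonMap_eq_card {A : Rooted V} {h : (cverts A.cplx).Finite} {v : V}
    (hv : v ∉ cverts A.cplx) : canonMap A h v = h.toFinset.card := by
  rw [canonMap, dif_neg (fun hc => hv (h.mem_toFinset.1 hc))]

lemma canonMap_injOn {A : Rooted V} (h : (cverts A.cplx).Finite) :
    Set.InjOn (canonMap A h) (cverts A.cplx) := by
  intro v hv v' hv' heq
  have hv1 : v ∈ h.toFinset := h.mem_toFinset.2 hv
  have hv2 : v' ∈ h.toFinset := h.mem_toFinset.2 hv'
  simp only [canonMap] at heq
  rw [dif_pos hv1, dif_pos hv2] at heq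
  have h1 := Fin.val_injective heq
  have h2 := (h.toFinset.equivFin).injective h1
  exact congrArg Subtype.val h2

noncomputable def canonRep (A : Rooted V) (h : (cverts A.cplx).Finite) : Rooted ℕ where
  cplx :=
    { faces := (fun σ => σ.image (canonMap A h)) '' A.cplx.faces
      nonempty_of_mem := by
        rintro _ ⟨σ, hσ, rfl⟩
        exact (A.cplx.nonempty_of_mem σ hσ).image _
      down_closed := by
        rintro _ ⟨σ, hσ, rfl⟩ τ hsub hne
        refine ⟨σ.filter (fun v => canonMap A h v ∈ τ), ?_, ?_⟩
        · refine A.cplx.down_closed σ hσ _ (Finset.filter_subset _ _) ?_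
          obtain ⟨x, hx⟩ := hne
          obtain ⟨v, hv, rfl⟩ := Finset.mem_image.1 (hsub hx)
          exact ⟨v, Finset.mem_filter.2 ⟨hv, hx⟩⟩
        · ext b
          simp only [Finset.mem_image, Finset.mem_filter]
          constructor
          · rintro ⟨v, ⟨hvσ, hvτ⟩, rfl⟩
            exact hvτ
          · intro hb
            obtain ⟨v, hv, rfl⟩ := Finset.mem_image.1 (hsub hb)
            exact ⟨v, ⟨hv, hb⟩, rfl⟩ }
  root := A.root.image (canonMap A h)

lemma iso_canonRep (A : Rooted V) (h : (cverts A.cplx).Finite) :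
    Iso A (canonRep A h) := by
  refine ⟨canonMap A h, canonMap_injOn h, ?_, ?_, ?_⟩
  · intro σ hσ
    rw [image_classical_eq]
    exact Set.mem_image_of_mem _ hσ
  · rintro τ ⟨σ, hσ, heq⟩
    refine ⟨σ, hσ, ?_⟩
    rw [image_classical_eq]
    exact heq
  · rw [image_classical_eq]
    rfl

lemma canonRep_mem_pool {A : Rooted V} {h : (cverts A.cplx).Finite} {m : ℕ}
    (hm : h.toFinset.card ≤ m) : canonRep A h ∈ pool m := by
  constructor
  · rintro _ ⟨σ, hσ, rfl⟩
    intro x hx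
    obtain ⟨v, hv, rfl⟩ := Finset.mem_image.1 hx
    refine Finset.mem_range.2 (lt_of_lt_of_le ?_ hm)
    exact canonMap_lt (face_coe_subset_cverts A.cplx hσ hv)
  · intro x hx
    obtain ⟨v, hv, rfl⟩ := Finset.mem_image.1 hx
    refine Finset.mem_range.2 (Nat.lt_succ_of_le ?_)
    by_cases hvv : v ∈ cverts A.cplx
    · exact le_trans (canonMap_lt hvv).le hm
    · rw [canonMap_eq_card hvv]; exact hm

lemma canonRep_root_mem {A : Rooted V} {h : (cverts A.cplx).Finite}
    (hr : A.root ∈ A.cplx.faces) :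
    (canonRep A h).root ∈ (canonRep A h).cplx.faces := ⟨A.root, hr, rfl⟩

lemma canonRep_root_card {A : Rooted V} {h : (cverts A.cplx).Finite}
    (hr : ↑A.root ⊆ cverts A.cplx) :
    (canonRep A h).root.card = A.root.card :=
  Finset.card_image_of_injOn ((canonMap_injOn h).mono hr)

lemma canonRep_bad {A : Rooted V} {h : (cverts A.cplx).Finite} {d : ℕ}
    (hbad : ¬(A.root ∈ A.cplx.faces ∧ A.root.card = d - 1 + 1)) :
    ¬((canonRep A h).root ∈ (canonRep A h).cplx.faces ∧
      (canonRep A h).root.card = d - 1 + 1) := by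
  by_cases hjunk : ↑A.root ⊆ cverts A.cplx
  · by_cases hrf : A.root ∈ A.cplx.faces
    · have hcard : A.root.card ≠ d - 1 + 1 := fun hc => hbad ⟨hrf, hc⟩
      rintro ⟨-, hc⟩
      rw [canonRep_root_card hjunk] at hc
      exact hcard hc
    · rintro ⟨⟨σ, hσ, heq⟩, -⟩
      have heq' : σ.image (canonMap A h) = A.root.image (canonMap A h) := heq
      rw [← image_classical_eq (canonMap A h) σ,
        ← image_classical_eq (canonMap A h) A.root] at heq'
      have : σ = A.root :=
        image_eq_of_image_eq (canonMap_injOn h)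
          (face_coe_subset_cverts A.cplx hσ) hjunk heq'
      exact hrf (this ▸ hσ)
  · rintro ⟨⟨σ, hσ, heq⟩, -⟩
    rw [Set.not_subset] at hjunk
    obtain ⟨u, hu, hunv⟩ := hjunk
    have hmem : h.toFinset.card ∈ (canonRep A h).root := by
      refine Finset.mem_image.2 ⟨u, hu, canonMap_eq_card hunv⟩
    rw [← heq] at hmem
    obtain ⟨v, hv, hveq⟩ := Finset.mem_image.1 hmem
    have := canonMap_lt (h := h) (face_coe_subset_cverts A.cplx hσ hv)
    omega
/-- Pool of good finite rooted complexes: clean root, small component. -/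
def poolGood (d K m : ℕ) : Set (Rooted ℕ) :=
  {H | H ∈ pool m ∧ H.root ∈ H.cplx.faces ∧ H.root.card = d - 1 + 1 ∧
    (component H.cplx d H.root).Finite ∧ (component H.cplx d H.root).ncard < K}

lemma poolGood_finite (d K m : ℕ) : (poolGood d K m).Finite :=
  (pool_finite m).subset fun _ h => h.1

noncomputable def repOf (P : Set (Rooted ℕ)) (G : Rooted ℕ) : Rooted ℕ :=
  if hG : G ∈ P then
    (IsWellFounded.wf (r := (WellOrderingRel : Rooted ℕ → Rooted ℕ → Prop))).min
      {H | H ∈ P ∧ Iso H G} ⟨G, hG, iso_refl G⟩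
  else G

lemma repOf_spec {P : Set (Rooted ℕ)} {G : Rooted ℕ} (hG : G ∈ P) :
    repOf P G ∈ P ∧ Iso (repOf P G) G := by
  rw [repOf, dif_pos hG]
  exact WellFounded.min_mem _ {H | H ∈ P ∧ Iso H G} ⟨G, hG, iso_refl G⟩

lemma repOf_not_lt {P : Set (Rooted ℕ)} {G : Rooted ℕ} (hG : G ∈ P)
    {H : Rooted ℕ} (hH : H ∈ P) (hiso : Iso H G) :
    ¬ WellOrderingRel H (repOf P G) := by
  rw [repOf, dif_pos hG]
  exact WellFounded.not_lt_min _ {H' | H' ∈ P ∧ Iso H' G} (x := H) ⟨hH, hiso⟩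

lemma repOf_eq_of_iso {P : Set (Rooted ℕ)} (hcl : ∀ H ∈ P, H.root ∈ H.cplx.faces)
    {G₁ G₂ : Rooted ℕ} (h1 : G₁ ∈ P) (h2 : G₂ ∈ P)
    (hiso : Iso (repOf P G₁) (repOf P G₂)) : repOf P G₁ = repOf P G₂ := by
  have m1 := repOf_spec h1
  have m2 := repOf_spec h2
  rcases trichotomous (r := (WellOrderingRel : Rooted ℕ → Rooted ℕ → Prop))
      (repOf P G₁) (repOf P G₂) with hlt | heq | hgt
  · exact absurd hlt (repOf_not_lt h2 m1.1 (iso_trans hiso m2.2))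
  · exact heq
  · have hsym : Iso (repOf P G₂) (repOf P G₁) := iso_symm hiso (hcl _ m1.1)
    exact absurd hgt (repOf_not_lt h1 m2.1 (iso_trans hsym m1.2))

/-- label bound -/
def NBnd (d K : ℕ) : ℕ := (d + 1) * (2 ^ K + 1)

/-- The canonical finite collection of representatives of small components. -/
noncomputable def repsS (d K : ℕ) : Set (Rooted ℕ) :=
  repOf (poolGood d K (NBnd d K)) '' poolGood d K (NBnd d K)

lemma repsS_finite (d K : ℕ) : (repsS d K).Finite :=
  (poolGood_finite d K (NBnd d K)).image _

lemma repsS_subset (d K : ℕ) : repsS d K ⊆ poolGood d K (NBnd d K) := by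
  rintro _ ⟨G, hG, rfl⟩
  exact (repOf_spec hG).1

lemma cover {X : SComplex V} {d K : ℕ} {σ₀ : Finset V}
    (hσ₀ : σ₀ ∈ simplices X (d - 1)) (hc : (component X d σ₀).Finite)
    (hK : (component X d σ₀).ncard < K) :
    ∃ H ∈ repsS d K, Iso (⟨ball X d σ₀ K, σ₀⟩ : Rooted V) H := by
  set A : Rooted V := ⟨ball X d σ₀ K, σ₀⟩ with hA
  have hroot : A.root ∈ A.cplx.faces := root_mem_ball_faces hσ₀.1 K
  have hvfin : (cverts A.cplx).Finite :=
    cverts_finite_of_faces (ball_faces_finite hσ₀ hc)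
  set C := canonRep A hvfin with hC
  have hisoC : Iso A C := iso_canonRep A hvfin
  have hCpool : C ∈ pool (NBnd d K) := by
    apply canonRep_mem_pool
    refine le_of_eq_of_le ((Set.ncard_eq_toFinset_card _ hvfin).symm) ?_
    exact ball_verts_bound hσ₀ hc hK
  have hrootsub : ↑A.root ⊆ cverts A.cplx := face_coe_subset_cverts _ hroot
  have hCroot : C.root ∈ C.cplx.faces := canonRep_root_mem hroot
  have hCcard : C.root.card = d - 1 + 1 := by
    rw [canonRep_root_card hrootsub]; exact hσ₀.2
  have hcompball : component A.cplx d A.root ⊆ component X d σ₀ :=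
    comp_ball_subset_comp
  have hcbfin : (component A.cplx d A.root).Finite := hc.subset hcompball
  have hsymm : Iso C A := iso_symm hisoC hroot
  obtain ⟨hCfin, hCle⟩ := comp_le_of_iso hsymm hcbfin
  have hClt : (component C.cplx d C.root).ncard < K :=
    lt_of_le_of_lt (hCle.trans (Set.ncard_le_ncard hcompball hc)) hK
  have hCgood : C ∈ poolGood d K (NBnd d K) := ⟨hCpool, hCroot, hCcard, hCfin, hClt⟩
  refine ⟨repOf _ C, Set.mem_image_of_mem _ hCgood, ?_⟩
  obtain ⟨hrep, hisoRC⟩ := repOf_spec hCgood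
  exact iso_trans hisoC (iso_symm hisoRC hrep.2.1)

lemma detect {X : SComplex V} {d K : ℕ} {σ₀ : Finset V}
    (hσ₀ : σ₀ ∈ simplices X (d - 1)) {H : Rooted ℕ}
    (hHfin : (component H.cplx d H.root).Finite)
    (hHlt : (component H.cplx d H.root).ncard < K)
    (hiso : Iso (⟨ball X d σ₀ K, σ₀⟩ : Rooted V) H) :
    (component X d σ₀).Finite ∧ (component X d σ₀).ncard < K := by
  obtain ⟨hbfin, hble⟩ := comp_le_of_iso hiso hHfin
  have hsub : dBd X d σ₀ K ⊆ component (ball X d σ₀ K) d σ₀ :=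
    fun τ hτ => conn_in_ball hσ₀ le_rfl τ hτ
  have hFfin : (dBd X d σ₀ K).Finite := hbfin.subset hsub
  have hFlt : (dBd X d σ₀ K).ncard < K :=
    lt_of_le_of_lt (Set.ncard_le_ncard hsub hbfin) (lt_of_le_of_lt hble hHlt)
  exact comp_small_of_dBd_small hσ₀ hFfin hFlt

lemma reps_disjoint {d K : ℕ} {A : Rooted V} (hroot : A.root ∈ A.cplx.faces)
    {H₁ H₂ : Rooted ℕ} (h1 : H₁ ∈ repsS d K) (h2 : H₂ ∈ repsS d K)
    (i1 : Iso A H₁) (i2 : Iso A H₂) : H₁ = H₂ := by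
  obtain ⟨G₁, hG₁, rfl⟩ := h1
  obtain ⟨G₂, hG₂, rfl⟩ := h2
  exact repOf_eq_of_iso (fun H hH => hH.2.1) hG₁ hG₂
    (iso_trans (iso_symm i1 hroot) i2)

lemma xside_good {X : SComplex V} {d r : ℕ} {σ : Finset V}
    (hσ : σ ∈ simplices X (d - 1)) {H : Rooted ℕ}
    (hiso : Iso (ballOf ⟨X, σ⟩ d r) H) :
    H.root ∈ H.cplx.faces ∧ H.root.card = d - 1 + 1 := by
  obtain ⟨φ, hinj, hmap, hsurj, hrt⟩ := hiso
  have hroot : σ ∈ (ball X d σ r).faces := root_mem_ball_faces hσ.1 r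
  have hrt' : @Finset.image V ℕ (fun a b => Classical.propDecidable (a = b)) φ σ
      = H.root := hrt
  constructor
  · rw [← hrt']
    exact hmap _ hroot
  · rw [← hrt', image_classical_eq,
      Finset.card_image_of_injOn (hinj.mono (face_coe_subset_cverts (ball X d σ r) hroot))]
    exact hσ.2
lemma sum_ncard_le {ι α : Type*} (F : Finset ι) (f : ι → Set α) :
    ∀ T : Set α, T.Finite → (∀ i ∈ F, f i ⊆ T) →
      (∀ i ∈ F, ∀ j ∈ F, i ≠ j → Disjoint (f i) (f j)) →
      ∑ i ∈ F, (f i).ncard ≤ T.ncard := by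
  classical
  induction F using Finset.induction_on with
  | empty => intro T _ _ _; simp
  | @insert a F ha ih =>
    intro T hT hsub hdisj
    rw [Finset.sum_insert ha]
    have h1 : f a ⊆ T := hsub a (Finset.mem_insert_self a F)
    have h2 : ∑ i ∈ F, (f i).ncard ≤ (T \ f a).ncard := by
      refine ih (T \ f a) hT.diff ?_ ?_
      · intro i hi
        have hne : i ≠ a := fun h => ha (h ▸ hi)
        have hd := hdisj i (Finset.mem_insert_of_mem hi) a
          (Finset.mem_insert_self a F) hne
        intro x hx
        exact ⟨hsub i (Finset.mem_insert_of_mem hi) hx,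
          fun hxa => (Set.disjoint_left.1 hd) hx hxa⟩
      · intro i hi j hj hij
        exact hdisj i (Finset.mem_insert_of_mem hi) j (Finset.mem_insert_of_mem hj) hij
    calc (f a).ncard + ∑ i ∈ F, (f i).ncard
        ≤ (f a).ncard + (T \ f a).ncard := add_le_add_right h2 _
      _ = (f a ∪ (T \ f a)).ncard :=
          (Set.ncard_union_eq Set.disjoint_sdiff_right (hT.subset h1) hT.diff).symm
      _ ≤ T.ncard := Set.ncard_le_ncard
          (Set.union_subset h1 Set.diff_subset) hT

lemma simplices_finite {X : SComplex V} (hfin : X.faces.Finite) (k : ℕ) :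
    (simplices X k).Finite := hfin.subset fun _ h => h.1

lemma maxCompCard_le_scount {X : SComplex V} {d : ℕ} (hfin : X.faces.Finite) :
    maxCompCard X d ≤ scount X (d - 1) := by
  rw [maxCompCard]
  rcases Set.eq_empty_or_nonempty (Set.ncard '' components X d) with he | hne
  · rw [he, csSup_empty]
    exact Nat.zero_le _
  · refine csSup_le hne ?_
    rintro _ ⟨C, ⟨σ, hσ, rfl⟩, rfl⟩
    exact Set.ncard_le_ncard (component_subset_simplices X d σ)
      (simplices_finite hfin _)

lemma maxCompCard_attained {X : SComplex V} {d : ℕ} (hfin : X.faces.Finite)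
    (hne : (simplices X (d - 1)).Nonempty) :
    ∃ σ₀ ∈ simplices X (d - 1), (component X d σ₀).ncard = maxCompCard X d := by
  have hcomps : components X d = (component X d) '' (simplices X (d - 1)) := by
    ext C
    simp only [components, Set.mem_image, Set.mem_setOf_eq]
    constructor
    · rintro ⟨σ, hσ, rfl⟩; exact ⟨σ, hσ, rfl⟩
    · rintro ⟨σ, hσ, rfl⟩; exact ⟨σ, hσ, rfl⟩
  have hcompfin : (components X d).Finite := by
    rw [hcomps]; exact (simplices_finite hfin _).image _
  have hSne : (Set.ncard '' components X d).Nonempty := by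
    obtain ⟨σ, hσ⟩ := hne
    exact ⟨(component X d σ).ncard, Set.mem_image_of_mem _ ⟨σ, hσ, rfl⟩⟩
  have hbdd : BddAbove (Set.ncard '' components X d) :=
    (hcompfin.image _).bddAbove
  have hmem := Nat.sSup_mem hSne hbdd
  obtain ⟨C, ⟨σ, hσ, rfl⟩, hC⟩ := hmem
  exact ⟨σ, hσ, hC⟩

lemma deterministic_core {X : SComplex V} {d K KK : ℕ} {zz εε : ℝ}
    (hfin : X.faces.Finite) (hz0 : 0 ≤ zz) (hε : 0 < εε)
    (hs : KK ≤ scount X (d - 1)) (hKK : (K : ℝ) ≤ (KK : ℝ) * εε) (hKK1 : 1 ≤ KK)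
    (F : Finset (Rooted ℕ)) (hFsub : ∀ H ∈ F, H ∈ repsS d K)
    (hcnt : (1 : ℝ) - zz - εε / 2 - εε / 4 ≤
      ∑ H ∈ F, (Set.ncard {σ | σ ∈ simplices X (d - 1) ∧
        Iso (ballOf ⟨X, σ⟩ d K) H} : ℝ) / (scount X (d - 1) : ℝ)) :
    (maxCompCard X d : ℝ) ≤ (scount X (d - 1) : ℝ) * (zz + εε) := by
  classical
  set s := scount X (d - 1) with hsdef
  have hs1 : 1 ≤ s := le_trans hKK1 hs
  have hspos : (0 : ℝ) < (s : ℝ) := by exact_mod_cast hs1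
  have hsimpfin : (simplices X (d - 1)).Finite := simplices_finite hfin _
  set A : Set (Finset V) :=
    {σ | σ ∈ simplices X (d - 1) ∧ (component X d σ).ncard < K} with hAdef
  -- the classes are disjoint subsets of A
  have hclass_sub : ∀ H ∈ F,
      {σ | σ ∈ simplices X (d - 1) ∧ Iso (ballOf ⟨X, σ⟩ d K) H} ⊆ A := by
    intro H hH σ hσ
    have hHgood := repsS_subset d K (hFsub H hH)
    refine ⟨hσ.1, (detect hσ.1 hHgood.2.2.2.1 hHgood.2.2.2.2 hσ.2).2⟩
  have hclass_disj : ∀ H₁ ∈ F, ∀ H₂ ∈ F, H₁ ≠ H₂ →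
      Disjoint {σ | σ ∈ simplices X (d - 1) ∧ Iso (ballOf ⟨X, σ⟩ d K) H₁}
        {σ | σ ∈ simplices X (d - 1) ∧ Iso (ballOf ⟨X, σ⟩ d K) H₂} := by
    intro H₁ h₁ H₂ h₂ hne
    rw [Set.disjoint_left]
    rintro σ ⟨hσ, hiso₁⟩ ⟨-, hiso₂⟩
    have hroot : ((⟨ball X d σ K, σ⟩ : Rooted V)).root ∈
        (⟨ball X d σ K, σ⟩ : Rooted V).cplx.faces := root_mem_ball_faces hσ.1 K
    exact hne (reps_disjoint hroot (hFsub H₁ h₁) (hFsub H₂ h₂) hiso₁ hiso₂)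
  have hsum_le : ∑ H ∈ F, ({σ | σ ∈ simplices X (d - 1) ∧
      Iso (ballOf ⟨X, σ⟩ d K) H}).ncard ≤ A.ncard :=
    sum_ncard_le F _ A (hsimpfin.subset fun σ h => h.1) hclass_sub hclass_disj
  -- lower bound on ncard A
  have hA_lb : (s : ℝ) * (1 - zz - εε / 2 - εε / 4) ≤ (A.ncard : ℝ) := by
    have h1 : ∑ H ∈ F, (Set.ncard {σ | σ ∈ simplices X (d - 1) ∧
        Iso (ballOf ⟨X, σ⟩ d K) H} : ℝ) / (s : ℝ) ≤ (A.ncard : ℝ) / (s : ℝ) := by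
      rw [← Finset.sum_div]
      gcongr
      exact_mod_cast hsum_le
    have h2 := hcnt.trans h1
    have h3 := (le_div_iff₀ hspos).1 h2
    linarith
  -- contradiction argument
  by_contra hcon
  push_neg at hcon
  obtain ⟨σ₀, hσ₀, hmax⟩ := maxCompCard_attained (d := d) hfin
    (Set.nonempty_of_ncard_ne_zero (by
      have hrfl : scount X (d - 1) = (simplices X (d - 1)).ncard := rfl
      omega))
  have hz_nonneg : (0:ℝ) ≤ (s : ℝ) * (zz + εε) := by positivity
  have hmaxK : (K : ℝ) ≤ (maxCompCard X d : ℝ) := by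
    calc (K : ℝ) ≤ (KK : ℝ) * εε := hKK
      _ ≤ (s : ℝ) * εε := by
          have : (KK : ℝ) ≤ (s : ℝ) := by exact_mod_cast hs
          nlinarith
      _ ≤ (s : ℝ) * (zz + εε) := by nlinarith
      _ ≤ (maxCompCard X d : ℝ) := hcon.le
  have hmaxKnat : K ≤ maxCompCard X d := by exact_mod_cast hmaxK
  -- the maximal component avoids A
  have hcomp_sub : component X d σ₀ ⊆ simplices X (d - 1) \ A := by
    intro σ' hσ'
    refine ⟨component_subset_simplices X d σ₀ hσ', ?_⟩
    intro hA'
    have hcc : component X d σ' = component X d σ₀ := component_eq_of_mem hσ'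
    have h2 : (component X d σ').ncard < K := hA'.2
    rw [hcc, hmax] at h2
    omega
  have hA_sub : A ⊆ simplices X (d - 1) \ component X d σ₀ := by
    intro σ hσA
    refine ⟨hσA.1, fun hc => ?_⟩
    exact (hcomp_sub hc).2 hσA
  have hAcard : A.ncard ≤ s - (component X d σ₀).ncard := by
    have h1 : A.ncard ≤ (simplices X (d - 1) \ component X d σ₀).ncard :=
      Set.ncard_le_ncard hA_sub hsimpfin.diff
    have h2 : (simplices X (d - 1) \ component X d σ₀).ncard =
        (simplices X (d - 1)).ncard - (component X d σ₀).ncard :=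
      Set.ncard_diff (component_subset_simplices X d σ₀)
        (hsimpfin.subset (component_subset_simplices X d σ₀))
    have h3 : (simplices X (d - 1)).ncard = s := rfl
    omega
  have hcompcard : (component X d σ₀).ncard = maxCompCard X d := hmax
  have hmc_le_s : maxCompCard X d ≤ s := maxCompCard_le_scount hfin
  -- numeric contradiction
  have hAreal : (A.ncard : ℝ) ≤ (s : ℝ) - (maxCompCard X d : ℝ) := by
    have : (A.ncard : ℝ) ≤ ((s - (component X d σ₀).ncard : ℕ) : ℝ) := by
      exact_mod_cast hAcard
    rw [Nat.cast_sub (hcompcard ▸ hmc_le_s), hcompcard] at this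
    exact this
  nlinarith [hcon, hspos, hε, hz0]
lemma null_class_of_empty
    {Ω : ℕ → Type*} [∀ n, MeasurableSpace (Ω n)]
    (μ : ∀ n, Measure (Ω n)) (hprob : ∀ n, IsProbabilityMeasure (μ n))
    {Vn : ℕ → Type*} (X : ∀ n, Ω n → SComplex (Vn n)) (d : ℕ)
    (hgrow1 : Tendsto (fun n => ((μ n) {ω | 1 ≤ scount (X n ω) (d - 1)}).toReal)
      atTop (nhds 1))
    {Ω' : Type*} [MeasurableSpace Ω'] (ν : Measure Ω') [IsProbabilityMeasure ν]
    (Y : Ω' → Rooted ℕ) (hlwc : ConvLWCinP μ X d ν Y)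
    (r : ℕ) (H : Rooted ℕ)
    (hempty : ∀ (n : ℕ) (ω : Ω n) (σ : Finset (Vn n)),
      σ ∈ simplices (X n ω) (d - 1) → ¬ Iso (ballOf ⟨X n ω, σ⟩ d r) H) :
    ν {ω' | Iso (ballOf (Y ω') d r) H} = 0 := by
  by_contra hne0
  have hfinH : ν {ω' | Iso (ballOf (Y ω') d r) H} ≠ ⊤ := measure_ne_top ν _
  have hcpos : 0 < (ν {ω' | Iso (ballOf (Y ω') d r) H}).toReal :=
    ENNReal.toReal_pos hne0 hfinH
  set c := (ν {ω' | Iso (ballOf (Y ω') d r) H}).toReal with hc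
  have h0 := hlwc r H (c / 2) (by positivity)
  have hsub : ∀ n, {ω | 1 ≤ scount (X n ω) (d - 1)} ⊆
      {ω | c / 2 < |(Set.ncard {σ | σ ∈ simplices (X n ω) (d - 1) ∧
        Iso (ballOf ⟨X n ω, σ⟩ d r) H} : ℝ) / (scount (X n ω) (d - 1) : ℝ) -
        (ν {ω' | Iso (ballOf (Y ω') d r) H}).toReal|} := by
    intro n ω _
    have hem : {σ | σ ∈ simplices (X n ω) (d - 1) ∧
        Iso (ballOf ⟨X n ω, σ⟩ d r) H} = ∅ := by
      ext σ
      simp only [Set.mem_setOf_eq, Set.mem_empty_iff_false, iff_false, not_and]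
      exact hempty n ω σ
    show c / 2 < |_ - _|
    rw [hem, Set.ncard_empty, Nat.cast_zero, zero_div, zero_sub, abs_neg, ← hc,
      abs_of_pos hcpos]
    linarith
  have hcomp : ∀ n, ((μ n) {ω | 1 ≤ scount (X n ω) (d - 1)}).toReal ≤
      ((μ n) {ω | c / 2 < |(Set.ncard {σ | σ ∈ simplices (X n ω) (d - 1) ∧
        Iso (ballOf ⟨X n ω, σ⟩ d r) H} : ℝ) / (scount (X n ω) (d - 1) : ℝ) -
        (ν {ω' | Iso (ballOf (Y ω') d r) H}).toReal|}).toReal :=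
    fun n => ENNReal.toReal_mono (measure_ne_top _ _) (measure_mono (hsub n))
  have hcontra := le_of_tendsto_of_tendsto' hgrow1 h0 hcomp
  linarith

/-- Proposition 2.2, local weak convergence upper-bounds the
giant component.  If `s_{d-1}(X_n) → ∞` (in probability) and `X n` converges
locally weakly in probability to `(ν, Y)`, then with
`ζ = ν(s_{d-1}(C(o)) = ∞)` the survival probability of the component of the
root, for every `ε > 0`,
`P(s_{d-1}(C_max) ≤ s_{d-1}(X_n)(ζ + ε)) → 1`. -/
theorem lwc_upper_bound_giant
    {Ω : ℕ → Type*} [∀ n, MeasurableSpace (Ω n)]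
    (μ : ∀ n, Measure (Ω n)) (hprob : ∀ n, IsProbabilityMeasure (μ n))
    {Vn : ℕ → Type*} (X : ∀ n, Ω n → SComplex (Vn n)) (d : ℕ)
    (hfin : ∀ n ω, (X n ω).faces.Finite)
    (hdim : ∀ n ω, ∀ σ ∈ (X n ω).faces, σ.card ≤ d + 1)
    (hgrow : ∀ K : ℕ,
      Tendsto (fun n => ((μ n) {ω | K ≤ scount (X n ω) (d - 1)}).toReal)
        atTop (nhds 1))
    {Ω' : Type*} [MeasurableSpace Ω'] (ν : Measure Ω') [IsProbabilityMeasure ν]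
    (Y : Ω' → Rooted ℕ)
    (hlwc : ConvLWCinP μ X d ν Y) :
    ∀ ε > (0 : ℝ),
      Tendsto (fun n => ((μ n) {ω |
        (maxCompCard (X n ω) d : ℝ) ≤ (scount (X n ω) (d - 1) : ℝ) *
          ((ν {ω' | ¬ (component (Y ω').cplx d (Y ω').root).Finite}).toReal
            + ε)}).toReal) atTop (nhds 1) := by

  intro ε hε
  classical
  set z : ℝ := (ν {ω' | ¬ (component (Y ω').cplx d (Y ω').root).Finite}).toReal
    with hzdef
  have hz0 : 0 ≤ z := ENNReal.toReal_nonneg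
  -- upper bound 1 on the target probabilities
  have hub : ∀ n, ((μ n) {ω | (maxCompCard (X n ω) d : ℝ) ≤
      (scount (X n ω) (d - 1) : ℝ) * (z + ε)}).toReal ≤ 1 := by
    intro n
    have h1 : (μ n) {ω | (maxCompCard (X n ω) d : ℝ) ≤
        (scount (X n ω) (d - 1) : ℝ) * (z + ε)} ≤ 1 := prob_le_one
    calc ((μ n) _).toReal ≤ (1 : ℝ≥0∞).toReal := ENNReal.toReal_mono ENNReal.one_ne_top h1
      _ = 1 := ENNReal.toReal_one
  by_cases hbig : 1 ≤ z + ε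
  · -- trivial case
    have hev : ∀ n, {ω | (maxCompCard (X n ω) d : ℝ) ≤
        (scount (X n ω) (d - 1) : ℝ) * (z + ε)} = Set.univ := by
      intro n
      ext ω
      simp only [Set.mem_setOf_eq, Set.mem_univ, iff_true]
      have h1 : (maxCompCard (X n ω) d : ℝ) ≤ (scount (X n ω) (d - 1) : ℝ) := by
        exact_mod_cast maxCompCard_le_scount (hfin n ω)
      nlinarith [(Nat.cast_nonneg (scount (X n ω) (d - 1)) : (0:ℝ) ≤ _)]
    simp only [hev, measure_univ, ENNReal.toReal_one]
    exact tendsto_const_nhds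
  push_neg at hbig
  -- bad classes are null
  have hbadnull : ∀ H : Rooted ℕ,
      ¬(H.root ∈ H.cplx.faces ∧ H.root.card = d - 1 + 1) →
      ν {ω' | Iso (ballOf (Y ω') d 0) H} = 0 := by
    intro H hbad
    refine null_class_of_empty μ hprob X d (hgrow 1) ν Y hlwc 0 H ?_
    intro n ω σ hσ hiso
    exact hbad (xside_good hσ hiso)
  -- bad roots are null
  set RB : Set Ω' := {ω' | ¬(((Y ω').root ∈ (Y ω').cplx.faces) ∧
    (Y ω').root.card = d - 1 + 1)} with hRBdef
  have hRB : ν RB = 0 := by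
    set badP : Set (Rooted ℕ) := ⋃ m, {H | H ∈ pool m ∧
      ¬(H.root ∈ H.cplx.faces ∧ H.root.card = d - 1 + 1)} with hbadP
    have hcnt : badP.Countable :=
      Set.countable_iUnion fun m =>
        (((pool_finite m).subset fun H h => h.1).countable)
    have hcov : RB ⊆ ⋃ H ∈ badP, {ω' | Iso (ballOf (Y ω') d 0) H} := by
      intro ω' hω'
      have hfa : (ballOf (Y ω') d 0).cplx.faces.Finite := by
        refine Set.Finite.subset ((Y ω').root.powerset.finite_toSet) ?_
        intro ρ hρ
        simp only [Finset.coe_powerset, Set.mem_preimage, Set.mem_powerset_iff,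
          Finset.coe_subset]
        exact hρ.2.1
      have hv := cverts_finite_of_faces hfa
      have hAbad : ¬((ballOf (Y ω') d 0).root ∈ (ballOf (Y ω') d 0).cplx.faces ∧
          (ballOf (Y ω') d 0).root.card = d - 1 + 1) := by
        rintro ⟨h1, h2⟩
        exact hω' ⟨h1.1, h2⟩
      refine Set.mem_biUnion (?_ : canonRep (ballOf (Y ω') d 0) hv ∈ badP) ?_
      · refine Set.mem_iUnion.2 ⟨hv.toFinset.card, ?_⟩
        exact ⟨canonRep_mem_pool le_rfl, canonRep_bad hAbad⟩
      · exact iso_canonRep (ballOf (Y ω') d 0) hv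
    refine measure_mono_null hcov ?_
    refine (measure_biUnion_null_iff hcnt).2 ?_
    intro H hH
    obtain ⟨m, hm⟩ := Set.mem_iUnion.1 hH
    exact hbadnull H hm.2
  -- Step 1: choose K with large dead-class mass
  have hstep1 : ∃ K : ℕ, 1 - z - ε / 2 ≤
      ∑ H ∈ (repsS_finite d K).toFinset,
        (ν {ω' | Iso (ballOf (Y ω') d K) H}).toReal := by
    by_contra hcon
    push_neg at hcon
    have hmono : Monotone (fun K => (⋃ H ∈ (repsS_finite d K).toFinset,
        {ω' | Iso (ballOf (Y ω') d K) H}) ∪ RB) := by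
      refine monotone_nat_of_le_succ ?_
      intro K ω' hω'
      rcases hω' with hcov | hR
      · by_cases hRB' : ω' ∈ RB
        · exact Or.inr hRB'
        · obtain ⟨H, hHF, hiso⟩ := Set.mem_iUnion₂.1 hcov
          have hHmem : H ∈ repsS d K := (repsS_finite d K).mem_toFinset.1 hHF
          have hg : (Y ω').root ∈ simplices (Y ω').cplx (d - 1) := by
            simp only [hRBdef, Set.mem_setOf_eq, not_not] at hRB'
            exact ⟨hRB'.1, hRB'.2⟩
          have hHgood := repsS_subset d K hHmem
          have hdet := detect hg hHgood.2.2.2.1 hHgood.2.2.2.2 hiso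
          obtain ⟨H', hH', hiso'⟩ :=
            cover (K := K + 1) hg hdet.1 (Nat.lt_succ_of_lt hdet.2)
          exact Or.inl (Set.mem_biUnion
            ((repsS_finite d (K + 1)).mem_toFinset.2 hH') hiso')
      · exact Or.inr hR
    have hcov2 : {ω' | (component (Y ω').cplx d (Y ω').root).Finite} ⊆
        ⋃ K, ((⋃ H ∈ (repsS_finite d K).toFinset,
          {ω' | Iso (ballOf (Y ω') d K) H}) ∪ RB) := by
      intro ω' hfinc
      by_cases hR : ω' ∈ RB
      · exact Set.mem_iUnion.2 ⟨0, Or.inr hR⟩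
      · have hg : (Y ω').root ∈ simplices (Y ω').cplx (d - 1) := by
          simp only [hRBdef, Set.mem_setOf_eq, not_not] at hR
          exact ⟨hR.1, hR.2⟩
        obtain ⟨H, hH, hiso⟩ :=
          cover (K := (component (Y ω').cplx d (Y ω').root).ncard + 1) hg hfinc
            (Nat.lt_succ_self _)
        exact Set.mem_iUnion.2 ⟨_, Or.inl (Set.mem_biUnion
          ((repsS_finite d _).mem_toFinset.2 hH) hiso)⟩
    have hbound : ∀ K, ν ((⋃ H ∈ (repsS_finite d K).toFinset,
        {ω' | Iso (ballOf (Y ω') d K) H}) ∪ RB) ≤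
        ENNReal.ofReal (1 - z - ε / 2) := by
      intro K
      have h1 : ν ((⋃ H ∈ (repsS_finite d K).toFinset,
          {ω' | Iso (ballOf (Y ω') d K) H}) ∪ RB) ≤
          ν (⋃ H ∈ (repsS_finite d K).toFinset,
            {ω' | Iso (ballOf (Y ω') d K) H}) + ν RB := measure_union_le _ _
      rw [hRB, add_zero] at h1
      refine h1.trans ?_
      have h2 : ν (⋃ H ∈ (repsS_finite d K).toFinset,
          {ω' | Iso (ballOf (Y ω') d K) H}) ≤
          ∑ H ∈ (repsS_finite d K).toFinset,
            ν {ω' | Iso (ballOf (Y ω') d K) H} :=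
        measure_biUnion_finset_le _ _
      refine h2.trans ?_
      have h3 : ∑ H ∈ (repsS_finite d K).toFinset,
          ν {ω' | Iso (ballOf (Y ω') d K) H} =
          ENNReal.ofReal (∑ H ∈ (repsS_finite d K).toFinset,
            (ν {ω' | Iso (ballOf (Y ω') d K) H}).toReal) := by
        rw [ENNReal.ofReal_sum_of_nonneg fun _ _ => ENNReal.toReal_nonneg]
        exact Finset.sum_congr rfl fun H _ =>
          (ENNReal.ofReal_toReal (measure_ne_top ν _)).symm
      rw [h3]
      exact ENNReal.ofReal_le_ofReal (hcon K).le
    have hsplit : (1 : ℝ≥0∞) ≤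
        ν {ω' | ¬ (component (Y ω').cplx d (Y ω').root).Finite} +
        ν {ω' | (component (Y ω').cplx d (Y ω').root).Finite} := by
      have huniv : (Set.univ : Set Ω') =
          {ω' | ¬ (component (Y ω').cplx d (Y ω').root).Finite} ∪
          {ω' | (component (Y ω').cplx d (Y ω').root).Finite} := by
        ext ω'
        simp only [Set.mem_univ, Set.mem_union, Set.mem_setOf_eq, true_iff]
        exact (em _).symm
      calc (1 : ℝ≥0∞) = ν Set.univ := measure_univ.symm
        _ ≤ _ := by rw [huniv]; exact measure_union_le _ _
    have hFle : ν {ω' | (component (Y ω').cplx d (Y ω').root).Finite} ≤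
        ENNReal.ofReal (1 - z - ε / 2) := by
      calc ν {ω' | (component (Y ω').cplx d (Y ω').root).Finite}
          ≤ ν (⋃ K, ((⋃ H ∈ (repsS_finite d K).toFinset,
              {ω' | Iso (ballOf (Y ω') d K) H}) ∪ RB)) := measure_mono hcov2
        _ = ⨆ K, ν ((⋃ H ∈ (repsS_finite d K).toFinset,
              {ω' | Iso (ballOf (Y ω') d K) H}) ∪ RB) := hmono.measure_iUnion
        _ ≤ ENNReal.ofReal (1 - z - ε / 2) := iSup_le hbound
    have hNFz : ν {ω' | ¬ (component (Y ω').cplx d (Y ω').root).Finite} =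
        ENNReal.ofReal z := (ENNReal.ofReal_toReal (measure_ne_top ν _)).symm
    have hfinal : (1 : ℝ≥0∞) ≤ ENNReal.ofReal z + ENNReal.ofReal (1 - z - ε / 2) := by
      refine hsplit.trans ?_
      rw [hNFz]
      exact add_le_add_right hFle _
    rw [← ENNReal.ofReal_add hz0 (by linarith)] at hfinal
    have hlt : ENNReal.ofReal (z + (1 - z - ε / 2)) < 1 := by
      rw [ENNReal.ofReal_lt_one]
      linarith
    exact absurd (lt_of_le_of_lt hfinal hlt) (lt_irrefl _)
  obtain ⟨K, hKsum⟩ := hstep1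
  set F : Finset (Rooted ℕ) := (repsS_finite d K).toFinset with hF
  set δ : ℝ := ε / (4 * ((F.card : ℝ) + 1)) with hδ
  have hδpos : 0 < δ := by positivity
  set KK : ℕ := max 1 ⌈(K : ℝ) / ε⌉₊ with hKKdef
  have hKK1 : 1 ≤ KK := le_max_left _ _
  have hKKε : (K : ℝ) ≤ (KK : ℝ) * ε := by
    have h1 : ((K : ℝ) / ε) ≤ (⌈(K : ℝ) / ε⌉₊ : ℝ) := Nat.le_ceil _
    have h2 : ((⌈(K : ℝ) / ε⌉₊ : ℕ) : ℝ) ≤ (KK : ℝ) := by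
      exact_mod_cast le_max_right 1 ⌈(K : ℝ) / ε⌉₊
    have h3 : (K : ℝ) / ε * ε = (K : ℝ) := div_mul_cancel₀ _ (ne_of_gt hε)
    nlinarith
  -- the union of bad events tends to zero
  have hBadsum : Tendsto (fun n => ∑ H ∈ F,
      ((μ n) {ω | δ < |(Set.ncard {σ | σ ∈ simplices (X n ω) (d - 1) ∧
        Iso (ballOf ⟨X n ω, σ⟩ d K) H} : ℝ) / (scount (X n ω) (d - 1) : ℝ) -
        (ν {ω' | Iso (ballOf (Y ω') d K) H}).toReal|}).toReal)
      atTop (nhds 0) := by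
    have h1 := tendsto_finset_sum F (fun H _ => hlwc K H δ hδpos)
    simpa using h1
  have hBadle : ∀ n, ((μ n) (⋃ H ∈ F,
      {ω | δ < |(Set.ncard {σ | σ ∈ simplices (X n ω) (d - 1) ∧
        Iso (ballOf ⟨X n ω, σ⟩ d K) H} : ℝ) / (scount (X n ω) (d - 1) : ℝ) -
        (ν {ω' | Iso (ballOf (Y ω') d K) H}).toReal|})).toReal ≤
      ∑ H ∈ F, ((μ n) {ω | δ < |(Set.ncard {σ | σ ∈ simplices (X n ω) (d - 1) ∧
        Iso (ballOf ⟨X n ω, σ⟩ d K) H} : ℝ) / (scount (X n ω) (d - 1) : ℝ) -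
        (ν {ω' | Iso (ballOf (Y ω') d K) H}).toReal|}).toReal := by
    intro n
    have h1 := measure_biUnion_finset_le (μ := μ n) F (fun H =>
      {ω | δ < |(Set.ncard {σ | σ ∈ simplices (X n ω) (d - 1) ∧
        Iso (ballOf ⟨X n ω, σ⟩ d K) H} : ℝ) / (scount (X n ω) (d - 1) : ℝ) -
        (ν {ω' | Iso (ballOf (Y ω') d K) H}).toReal|})
    calc ((μ n) _).toReal ≤ (∑ H ∈ F, (μ n) _).toReal :=
          ENNReal.toReal_mono (by
            refine (ENNReal.sum_ne_top).2 fun H _ => measure_ne_top _ _) h1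
      _ = _ := ENNReal.toReal_sum fun H _ => measure_ne_top _ _
  have hBad0 : Tendsto (fun n => ((μ n) (⋃ H ∈ F,
      {ω | δ < |(Set.ncard {σ | σ ∈ simplices (X n ω) (d - 1) ∧
        Iso (ballOf ⟨X n ω, σ⟩ d K) H} : ℝ) / (scount (X n ω) (d - 1) : ℝ) -
        (ν {ω' | Iso (ballOf (Y ω') d K) H}).toReal|})).toReal)
      atTop (nhds 0) :=
    squeeze_zero (fun n => ENNReal.toReal_nonneg) hBadle hBadsum
  -- key deterministic inclusion
  have hincl : ∀ n, {ω | KK ≤ scount (X n ω) (d - 1)} \ (⋃ H ∈ F,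
      {ω | δ < |(Set.ncard {σ | σ ∈ simplices (X n ω) (d - 1) ∧
        Iso (ballOf ⟨X n ω, σ⟩ d K) H} : ℝ) / (scount (X n ω) (d - 1) : ℝ) -
        (ν {ω' | Iso (ballOf (Y ω') d K) H}).toReal|}) ⊆
      {ω | (maxCompCard (X n ω) d : ℝ) ≤ (scount (X n ω) (d - 1) : ℝ) * (z + ε)} := by
    rintro n ω ⟨hωS, hωB⟩
    have hclose : ∀ H ∈ F,
        |(Set.ncard {σ | σ ∈ simplices (X n ω) (d - 1) ∧
          Iso (ballOf ⟨X n ω, σ⟩ d K) H} : ℝ) / (scount (X n ω) (d - 1) : ℝ) -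
          (ν {ω' | Iso (ballOf (Y ω') d K) H}).toReal| ≤ δ := by
      intro H hH
      by_contra hlt
      push_neg at hlt
      exact hωB (Set.mem_biUnion hH hlt)
    have hsum : (1 : ℝ) - z - ε / 2 - ε / 4 ≤
        ∑ H ∈ F, (Set.ncard {σ | σ ∈ simplices (X n ω) (d - 1) ∧
          Iso (ballOf ⟨X n ω, σ⟩ d K) H} : ℝ) / (scount (X n ω) (d - 1) : ℝ) := by
      have h1 : ∑ H ∈ F, ((ν {ω' | Iso (ballOf (Y ω') d K) H}).toReal - δ) ≤
          ∑ H ∈ F, (Set.ncard {σ | σ ∈ simplices (X n ω) (d - 1) ∧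
            Iso (ballOf ⟨X n ω, σ⟩ d K) H} : ℝ) / (scount (X n ω) (d - 1) : ℝ) := by
        refine Finset.sum_le_sum fun H hH => ?_
        have h2 := hclose H hH
        rw [abs_le] at h2
        linarith [h2.1]
      have h2 : ∑ H ∈ F, ((ν {ω' | Iso (ballOf (Y ω') d K) H}).toReal - δ) =
          (∑ H ∈ F, (ν {ω' | Iso (ballOf (Y ω') d K) H}).toReal) -
            (F.card : ℝ) * δ := by
        rw [Finset.sum_sub_distrib, Finset.sum_const, nsmul_eq_mul]
      have h3 : (F.card : ℝ) * δ ≤ ε / 4 := by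
        rw [hδ, ← mul_div_assoc]
        rw [div_le_div_iff₀ (by positivity) (by norm_num : (0 : ℝ) < 4)]
        nlinarith [hε.le, (Nat.cast_nonneg F.card : (0:ℝ) ≤ _)]
      linarith [hKsum]
    exact deterministic_core (hfin n ω) hz0 hε hωS hKKε hKK1 F
      (fun H hH => (repsS_finite d K).mem_toFinset.1 hH) hsum
  -- final measure comparison
  have hlow : ∀ n, ((μ n) {ω | KK ≤ scount (X n ω) (d - 1)}).toReal -
      ((μ n) (⋃ H ∈ F,
        {ω | δ < |(Set.ncard {σ | σ ∈ simplices (X n ω) (d - 1) ∧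
          Iso (ballOf ⟨X n ω, σ⟩ d K) H} : ℝ) / (scount (X n ω) (d - 1) : ℝ) -
          (ν {ω' | Iso (ballOf (Y ω') d K) H}).toReal|})).toReal ≤
      ((μ n) {ω | (maxCompCard (X n ω) d : ℝ) ≤
        (scount (X n ω) (d - 1) : ℝ) * (z + ε)}).toReal := by
    intro n
    have hsubset : {ω | KK ≤ scount (X n ω) (d - 1)} ⊆
        {ω | (maxCompCard (X n ω) d : ℝ) ≤
          (scount (X n ω) (d - 1) : ℝ) * (z + ε)} ∪ (⋃ H ∈ F,
        {ω | δ < |(Set.ncard {σ | σ ∈ simplices (X n ω) (d - 1) ∧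
          Iso (ballOf ⟨X n ω, σ⟩ d K) H} : ℝ) / (scount (X n ω) (d - 1) : ℝ) -
          (ν {ω' | Iso (ballOf (Y ω') d K) H}).toReal|}) := by
      intro ω hω
      by_cases hB : ω ∈ ⋃ H ∈ F,
        {ω | δ < |(Set.ncard {σ | σ ∈ simplices (X n ω) (d - 1) ∧
          Iso (ballOf ⟨X n ω, σ⟩ d K) H} : ℝ) / (scount (X n ω) (d - 1) : ℝ) -
          (ν {ω' | Iso (ballOf (Y ω') d K) H}).toReal|}
      · exact Or.inr hB
      · exact Or.inl (hincl n ⟨hω, hB⟩)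
    have h1 : (μ n) {ω | KK ≤ scount (X n ω) (d - 1)} ≤
        (μ n) {ω | (maxCompCard (X n ω) d : ℝ) ≤
          (scount (X n ω) (d - 1) : ℝ) * (z + ε)} + (μ n) (⋃ H ∈ F,
        {ω | δ < |(Set.ncard {σ | σ ∈ simplices (X n ω) (d - 1) ∧
          Iso (ballOf ⟨X n ω, σ⟩ d K) H} : ℝ) / (scount (X n ω) (d - 1) : ℝ) -
          (ν {ω' | Iso (ballOf (Y ω') d K) H}).toReal|}) :=
      (measure_mono hsubset).trans (measure_union_le _ _)
    have h2 := ENNReal.toReal_mono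
      (ENNReal.add_ne_top.2 ⟨measure_ne_top _ _, measure_ne_top _ _⟩) h1
    rw [ENNReal.toReal_add (measure_ne_top _ _) (measure_ne_top _ _)] at h2
    linarith
  have hlowlim : Tendsto (fun n =>
      ((μ n) {ω | KK ≤ scount (X n ω) (d - 1)}).toReal -
      ((μ n) (⋃ H ∈ F,
        {ω | δ < |(Set.ncard {σ | σ ∈ simplices (X n ω) (d - 1) ∧
          Iso (ballOf ⟨X n ω, σ⟩ d K) H} : ℝ) / (scount (X n ω) (d - 1) : ℝ) -
          (ν {ω' | Iso (ballOf (Y ω') d K) H}).toReal|})).toReal)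
      atTop (nhds 1) := by
    have h1 := (hgrow KK).sub hBad0
    simpa using h1
  exact tendsto_of_tendsto_of_tendsto_of_le_of_le hlowlim tendsto_const_nhds
    hlow hub

end RSC
end

section
/- Let C be the total progeny of a Galton–Watson branching process whose offspring distribution is d·Poi(λ) (d times a Poisson random variable with mean λ), with the convention 1/C := 0 when C = ∞. Then E[1/C] = γ_λ − λ·(d/(d+1))·γ_λ^{d+1}, where γ_λ is the extinction probability of the process, i.e. the smallest solution in [0,1] of γ = e^{−λ(1−γ^d)}. Moreover, the restricted generating function G(z) := E[ z^C · 1{C < ∞} ] satisfies G(z) = z·e^{λ(G(z)^d − 1)} for z ∈ [0,1], and E[1/C] = ∫_0^1 G(t)/t dt. -/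
open MeasureTheory Filter Finset Asymptotics
open scoped ENNReal NNReal Classical

namespace RSC

variable {V W : Type*}

namespace GW

/-! ### Finite trees encoded as finite sets of lists -/

noncomputable def childIdx (t : Finset (List ℕ)) (l : List ℕ) : Finset ℕ :=
  (t.filter (fun m => ∃ c, m = c :: l)).image (fun m => m.headI)

lemma mem_childIdx {t : Finset (List ℕ)} {l : List ℕ} {c : ℕ} :
    c ∈ childIdx t l ↔ c :: l ∈ t := by
  simp only [childIdx, Finset.mem_image, Finset.mem_filter]
  constructor
  · rintro ⟨m, ⟨hm, c', rfl⟩, rfl⟩; exact hm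
  · intro h; exact ⟨c :: l, ⟨h, c, rfl⟩, rfl⟩

noncomputable def nchild (t : Finset (List ℕ)) (l : List ℕ) : ℕ := (childIdx t l).card

def IsTree (t : Finset (List ℕ)) : Prop :=
  [] ∈ t ∧ ∀ c l, c :: l ∈ t ↔ (l ∈ t ∧ c < nchild t l)

abbrev TreeT : Type := {t : Finset (List ℕ) // IsTree t}

instance : Countable TreeT := Subtype.countable

lemma concat_inj {l1 l2 : List ℕ} {a b : ℕ} (h : l1 ++ [a] = l2 ++ [b]) :
    l1 = l2 ∧ a = b := by
  have h' := congrArg List.reverse h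
  simp only [List.reverse_append, List.reverse_cons, List.reverse_nil, List.nil_append,
    List.cons_append, List.cons.injEq] at h'
  exact ⟨by simpa using congrArg List.reverse h'.2, h'.1⟩

lemma IsTree.drop_append {t : Finset (List ℕ)} (ht : IsTree t) :
    ∀ (x l : List ℕ), x ++ l ∈ t → l ∈ t := by
  intro x
  induction x with
  | nil => intro l h; simpa using h
  | cons a x ih =>
    intro l h
    rw [List.cons_append, ht.2] at h
    exact ih l h.1

noncomputable def subtreeAt (i : ℕ) (t : Finset (List ℕ)) : Finset (List ℕ) :=
  (t.filter (fun m => ∃ l, m = l ++ [i])).image List.dropLast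

lemma mem_subtreeAt {i : ℕ} {t : Finset (List ℕ)} {l : List ℕ} :
    l ∈ subtreeAt i t ↔ l ++ [i] ∈ t := by
  simp only [subtreeAt, Finset.mem_image, Finset.mem_filter]
  constructor
  · rintro ⟨m, ⟨hm, l', rfl⟩, rfl⟩; simpa using hm
  · intro h; exact ⟨l ++ [i], ⟨h, l, rfl⟩, by simp⟩

lemma childIdx_subtreeAt {i : ℕ} {t : Finset (List ℕ)} (l : List ℕ) :
    childIdx (subtreeAt i t) l = childIdx t (l ++ [i]) := by
  ext c
  simp only [mem_childIdx, mem_subtreeAt, List.cons_append]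

lemma subtreeAt_isTree {t : Finset (List ℕ)} (ht : IsTree t) {i : ℕ}
    (hi : i < nchild t []) : IsTree (subtreeAt i t) := by
  constructor
  · rw [mem_subtreeAt, List.nil_append]
    exact (ht.2 i []).2 ⟨ht.1, hi⟩
  · intro c l
    rw [mem_subtreeAt, List.cons_append, ht.2, mem_subtreeAt]
    unfold nchild
    rw [childIdx_subtreeAt]

noncomputable def graft (m : ℕ) (f : ℕ → Finset (List ℕ)) : Finset (List ℕ) :=
  {[]} ∪ (Finset.range m).biUnion (fun i => (f i).image (fun l => l ++ [i]))

lemma mem_graft {m : ℕ} {f : ℕ → Finset (List ℕ)} {l : List ℕ} :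
    l ∈ graft m f ↔ l = [] ∨ ∃ i < m, ∃ x ∈ f i, l = x ++ [i] := by
  simp only [graft, Finset.mem_union, Finset.mem_singleton, Finset.mem_biUnion,
    Finset.mem_range, Finset.mem_image]
  constructor
  · rintro (h | ⟨i, hi, x, hx, rfl⟩)
    · exact Or.inl h
    · exact Or.inr ⟨i, hi, x, hx, rfl⟩
  · rintro (h | ⟨i, hi, x, hx, rfl⟩)
    · exact Or.inl h
    · exact Or.inr ⟨i, hi, x, hx, rfl⟩

lemma childIdx_graft_nil {m : ℕ} {f : ℕ → Finset (List ℕ)}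
    (hf : ∀ i < m, [] ∈ f i) : childIdx (graft m f) [] = Finset.range m := by
  ext c
  simp only [mem_childIdx, Finset.mem_range, mem_graft]
  constructor
  · rintro (h | ⟨i, hi, x, hx, hcx⟩)
    · simp at h
    · have : [] ++ [c] = x ++ [i] := by simpa using hcx
      obtain ⟨rfl, rfl⟩ := concat_inj this
      exact hi
  · intro hc
    exact Or.inr ⟨c, hc, [], hf c hc, by simp⟩

lemma nchild_graft_nil {m : ℕ} {f : ℕ → Finset (List ℕ)}
    (hf : ∀ i < m, [] ∈ f i) : nchild (graft m f) [] = m := by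
  rw [nchild, childIdx_graft_nil hf, Finset.card_range]

lemma childIdx_graft_append {m : ℕ} {f : ℕ → Finset (List ℕ)} {i : ℕ} (hi : i < m)
    (l : List ℕ) : childIdx (graft m f) (l ++ [i]) = childIdx (f i) l := by
  ext c
  simp only [mem_childIdx, mem_graft]
  constructor
  · rintro (h | ⟨j, hj, x, hx, hcx⟩)
    · simp at h
    · rw [← List.cons_append] at hcx
      obtain ⟨rfl, rfl⟩ := concat_inj hcx
      exact hx
  · intro hc
    exact Or.inr ⟨i, hi, c :: l, hc, by simp⟩

lemma graft_isTree {m : ℕ} {f : ℕ → Finset (List ℕ)}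
    (hf : ∀ i < m, IsTree (f i)) : IsTree (graft m f) := by
  have hnil : [] ∈ graft m f := mem_graft.2 (Or.inl rfl)
  refine ⟨hnil, fun c l => ?_⟩
  rcases eq_or_ne l [] with rfl | hl
  · have hm : nchild (graft m f) [] = m := nchild_graft_nil (fun i hi => (hf i hi).1)
    rw [hm]
    constructor
    · intro h
      rcases mem_graft.1 h with h' | ⟨i, hi, x, hx, hcx⟩
      · simp at h'
      · have : [] ++ [c] = x ++ [i] := by simpa using hcx
        obtain ⟨rfl, rfl⟩ := concat_inj this
        exact ⟨hnil, hi⟩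
    · rintro ⟨-, hc⟩
      exact mem_graft.2 (Or.inr ⟨c, hc, [], (hf c hc).1, by simp⟩)
  · constructor
    · intro h
      rcases mem_graft.1 h with h' | ⟨j, hj, x, hx, hcx⟩
      · simp at h'
      · rcases x with _ | ⟨a, x'⟩
        · rw [List.nil_append, List.cons.injEq] at hcx
          exact absurd hcx.2 hl
        · rw [List.cons_append, List.cons.injEq] at hcx
          obtain ⟨rfl, rfl⟩ := hcx
          have h2 := ((hf j hj).2 c x').1 hx
          refine ⟨mem_graft.2 (Or.inr ⟨j, hj, x', h2.1, rfl⟩), ?_⟩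
          rw [nchild, childIdx_graft_append hj x']
          exact h2.2
    · rintro ⟨hlm, hc⟩
      rcases mem_graft.1 hlm with h' | ⟨j, hj, x, hx, rfl⟩
      · exact absurd h' hl
      · rw [nchild, childIdx_graft_append hj x] at hc
        have : c :: x ∈ f j := ((hf j hj).2 c x).2 ⟨hx, hc⟩
        exact mem_graft.2 (Or.inr ⟨j, hj, c :: x, this, by simp⟩)

lemma graft_subtree {t : Finset (List ℕ)} (ht : IsTree t) :
    graft (nchild t []) (fun i => subtreeAt i t) = t := by
  ext l
  rw [mem_graft]
  constructor
  · rintro (rfl | ⟨i, hi, x, hx, rfl⟩)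
    · exact ht.1
    · exact mem_subtreeAt.1 hx
  · intro hl
    rcases eq_or_ne l [] with rfl | hne
    · exact Or.inl rfl
    · obtain ⟨x, i, rfl⟩ : ∃ x i, l = x ++ [i] :=
        ⟨l.dropLast, l.getLast hne, (List.dropLast_append_getLast hne).symm⟩
      have hi : [i] ∈ t := ht.drop_append x [i] hl
      have : i < nchild t [] := ((ht.2 i []).1 hi).2
      exact Or.inr ⟨i, this, x, mem_subtreeAt.2 hl, rfl⟩

lemma subtreeAt_graft {m : ℕ} {f : ℕ → Finset (List ℕ)} {i : ℕ} (hi : i < m) :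
    subtreeAt i (graft m f) = f i := by
  ext l
  rw [mem_subtreeAt, mem_graft]
  constructor
  · rintro (h | ⟨j, hj, x, hx, hcx⟩)
    · exact absurd h (by simp)
    · obtain ⟨rfl, rfl⟩ := concat_inj hcx
      exact hx
  · intro h
    exact Or.inr ⟨i, hi, l, h, rfl⟩

/-! ### Weights and grafting sums -/

noncomputable def wtp (p : ℕ → ℝ≥0∞) (t : Finset (List ℕ)) : ℝ≥0∞ :=
  ∏ l ∈ t, p (nchild t l)

lemma append_singleton_injective (i : ℕ) :
    Function.Injective (fun l : List ℕ => l ++ [i]) := fun _ _ h => (concat_inj h).1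

lemma graft_eq_disjUnion (m : ℕ) (f : ℕ → Finset (List ℕ)) :
    Disjoint ({[]} : Finset (List ℕ))
      ((Finset.range m).biUnion (fun i => (f i).image (fun l => l ++ [i]))) := by
  simp only [Finset.disjoint_left, Finset.mem_singleton]
  rintro a rfl h
  simp only [Finset.mem_biUnion, Finset.mem_image, Finset.mem_range] at h
  obtain ⟨i, -, x, -, hx⟩ := h
  exact absurd hx.symm (by simp)

lemma graft_pairwise (m : ℕ) (f : ℕ → Finset (List ℕ)) :
    ∀ i ∈ Finset.range m, ∀ j ∈ Finset.range m, i ≠ j →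
      Disjoint ((f i).image (fun l => l ++ [i])) ((f j).image (fun l => l ++ [j])) := by
  intro i _ j _ hij
  simp only [Finset.disjoint_left, Finset.mem_image]
  rintro a ⟨x, -, rfl⟩ ⟨y, -, hy⟩
  exact hij ((concat_inj hy).2).symm

lemma prod_graft {M : Type*} [CommMonoid M] (m : ℕ) (f : ℕ → Finset (List ℕ))
    (g : List ℕ → M) :
    ∏ l ∈ graft m f, g l = g [] * ∏ i ∈ Finset.range m, ∏ x ∈ f i, g (x ++ [i]) := by
  rw [graft, Finset.prod_union (graft_eq_disjUnion m f),
    Finset.prod_biUnion (graft_pairwise m f), Finset.prod_singleton]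
  congr 1
  exact Finset.prod_congr rfl fun i _ =>
    Finset.prod_image (fun x _ y _ h => append_singleton_injective i h)

lemma sum_graft {M : Type*} [AddCommMonoid M] (m : ℕ) (f : ℕ → Finset (List ℕ))
    (g : List ℕ → M) :
    ∑ l ∈ graft m f, g l = g [] + ∑ i ∈ Finset.range m, ∑ x ∈ f i, g (x ++ [i]) := by
  rw [graft, Finset.sum_union (graft_eq_disjUnion m f),
    Finset.sum_biUnion (graft_pairwise m f), Finset.sum_singleton]
  congr 1
  exact Finset.sum_congr rfl fun i _ =>
    Finset.sum_image (fun x _ y _ h => append_singleton_injective i h)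

lemma card_graft (m : ℕ) (f : ℕ → Finset (List ℕ)) :
    (graft m f).card = 1 + ∑ i ∈ Finset.range m, (f i).card := by
  rw [Finset.card_eq_sum_ones, sum_graft m f (fun _ => 1)]
  congr 1
  exact Finset.sum_congr rfl fun i _ => (Finset.card_eq_sum_ones _).symm

lemma wtp_graft (p : ℕ → ℝ≥0∞) {m : ℕ} {f : ℕ → Finset (List ℕ)}
    (hf : ∀ i < m, IsTree (f i)) :
    wtp p (graft m f) = p m * ∏ i ∈ Finset.range m, wtp p (f i) := by
  rw [wtp, prod_graft m f (fun l => p (nchild (graft m f) l)),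
    nchild_graft_nil (fun i hi => (hf i hi).1)]
  congr 1
  refine Finset.prod_congr rfl fun i hi => ?_
  refine Finset.prod_congr rfl fun x _ => ?_
  rw [nchild, childIdx_graft_append (Finset.mem_range.1 hi) x]
  rfl

/-! ### The grafting bijection on trees -/

noncomputable def graftT (m : ℕ) (f : Fin m → TreeT) : TreeT :=
  ⟨graft m (fun i => if h : i < m then (f ⟨i, h⟩).1 else {[]}),
    graft_isTree (fun i hi => by rw [dif_pos hi]; exact (f ⟨i, hi⟩).2)⟩

lemma nchild_graftT (m : ℕ) (f : Fin m → TreeT) :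
    nchild (graftT m f).1 [] = m := by
  refine nchild_graft_nil fun i hi => ?_
  rw [dif_pos hi]
  exact (f ⟨i, hi⟩).2.1

lemma subtreeAt_graftT (m : ℕ) (f : Fin m → TreeT) (i : Fin m) :
    subtreeAt i (graftT m f).1 = (f i).1 := by
  rw [show (graftT m f).1 = graft m _ from rfl, subtreeAt_graft i.2, dif_pos i.2, Fin.eta]

lemma graft_congr {m : ℕ} {f g : ℕ → Finset (List ℕ)}
    (h : ∀ i < m, f i = g i) : graft m f = graft m g := by
  unfold graft
  congr 1
  refine Finset.biUnion_congr rfl fun i hi => ?_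
  rw [h i (Finset.mem_range.1 hi)]

lemma sigmaGraft_bijective :
    Function.Bijective (fun x : Σ m : ℕ, (Fin m → TreeT) => graftT x.1 x.2) := by
  constructor
  · rintro ⟨m, f⟩ ⟨m', f'⟩ h
    simp only at h
    have hm : m = m' := by
      rw [← nchild_graftT m f, ← nchild_graftT m' f', h]
    subst hm
    have hf : f = f' := by
      funext i
      have := subtreeAt_graftT m f i
      rw [h, subtreeAt_graftT m f' i] at this
      exact Subtype.ext this.symm
    rw [hf]
  · intro t
    refine ⟨⟨nchild t.1 [], fun i => ⟨subtreeAt i t.1, subtreeAt_isTree t.2 i.2⟩⟩, ?_⟩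
    apply Subtype.ext
    show graft _ _ = t.1
    rw [graft_congr (g := fun i => subtreeAt i t.1) (fun i hi => by rw [dif_pos hi])]
    exact graft_subtree t.2

lemma tsum_treeT (F : TreeT → ℝ≥0∞) :
    ∑' t : TreeT, F t = ∑' m : ℕ, ∑' f : Fin m → TreeT, F (graftT m f) := by
  rw [← (Equiv.ofBijective _ sigmaGraft_bijective).tsum_eq F]
  exact ENNReal.tsum_sigma' _

lemma tsum_pi_pow {α : Type*} (g : α → ℝ≥0∞) :
    ∀ m : ℕ, (∑' f : Fin m → α, ∏ i, g (f i)) = (∑' a, g a) ^ m := by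
  intro m
  induction m with
  | zero =>
    rw [pow_zero]
    rw [tsum_eq_single (fun i => i.elim0) (fun b hb => absurd (Subsingleton.elim b _) hb)]
    simp
  | succ m ih =>
    have key : (∑' p : α × (Fin m → α), (g p.1 * ∏ i : Fin m, g (p.2 i)))
        = (∑' a, g a) ^ (m + 1) := by
      rw [ENNReal.tsum_prod' (f := fun p : α × (Fin m → α) => g p.1 * ∏ i : Fin m, g (p.2 i))]
      calc (∑' a, ∑' w : Fin m → α, g a * ∏ i, g (w i))
          = ∑' a : α, g a * ∑' w : Fin m → α, ∏ i, g (w i) :=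
            tsum_congr fun a => ENNReal.tsum_mul_left
        _ = (∑' a : α, g a) * ((∑' a, g a) ^ m) := by rw [ih, ENNReal.tsum_mul_right]
        _ = (∑' a, g a) ^ (m + 1) := by rw [pow_succ, mul_comm]
    rw [← key, ← (Fin.consEquiv (fun _ : Fin (m + 1) => α)).tsum_eq
      (fun v : Fin (m + 1) → α => ∏ i, g (v i))]
    refine tsum_congr fun p => ?_
    simp only [Fin.consEquiv_apply]
    rw [Fin.prod_univ_succ]
    simp

lemma prod_ite_all {ι : Type*} (s : Finset ι) (P : ι → Prop) (a : ι → ℝ≥0∞) :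
    (∏ i ∈ s, if P i then a i else 0) = if ∀ i ∈ s, P i then ∏ i ∈ s, a i else 0 := by
  by_cases h : ∀ i ∈ s, P i
  · rw [if_pos h]
    exact Finset.prod_congr rfl fun i hi => if_pos (h i hi)
  · rw [if_neg h]
    push_neg at h
    obtain ⟨i, hi, hPi⟩ := h
    exact Finset.prod_eq_zero hi (if_neg hPi)

lemma fext_eq (m : ℕ) (f : Fin m → TreeT) (i : Fin m) :
    (fun j => if h : j < m then (f ⟨j, h⟩).1 else ({[]} : Finset (List ℕ))) (i : ℕ)
      = (f i).1 := by
  dsimp only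
  rw [dif_pos i.2, Fin.eta]

lemma card_graftT (m : ℕ) (f : Fin m → TreeT) :
    (graftT m f).1.card = 1 + ∑ i : Fin m, (f i).1.card := by
  show (graft m _).card = _
  rw [card_graft]
  congr 1
  rw [← Fin.sum_univ_eq_sum_range (fun i => ((fun j => if h : j < m then (f ⟨j, h⟩).1
    else {[]}) i).card) m]
  exact Finset.sum_congr rfl fun i _ => congrArg Finset.card (fext_eq m f i)

lemma wtp_graftT (p : ℕ → ℝ≥0∞) (m : ℕ) (f : Fin m → TreeT) :
    wtp p (graftT m f).1 = p m * ∏ i : Fin m, wtp p (f i).1 := by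
  show wtp p (graft m _) = _
  rw [wtp_graft p (fun i hi => by rw [dif_pos hi]; exact (f ⟨i, hi⟩).2)]
  congr 1
  rw [← Fin.prod_univ_eq_prod_range (fun i => wtp p ((fun j => if h : j < m then (f ⟨j, h⟩).1
    else {[]}) i)) m]
  exact Finset.prod_congr rfl fun i _ => congrArg (wtp p) (fext_eq m f i)

lemma tsum_decomp (p : ℕ → ℝ≥0∞) (x : ℝ≥0∞) (P Q : TreeT → Prop)
    (hPQ : ∀ (m : ℕ) (f : Fin m → TreeT), P (graftT m f) ↔ ∀ i, Q (f i)) :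
    ∑' t : TreeT, (if P t then wtp p t.1 * x ^ t.1.card else 0)
      = x * ∑' m : ℕ, p m *
          (∑' t : TreeT, if Q t then wtp p t.1 * x ^ t.1.card else 0) ^ m := by
  rw [tsum_treeT, ← ENNReal.tsum_mul_left]
  refine tsum_congr fun m => ?_
  have hterm : ∀ f : Fin m → TreeT,
      (if P (graftT m f) then wtp p (graftT m f).1 * x ^ (graftT m f).1.card else 0)
        = x * p m * ∏ i : Fin m,
            (if Q (f i) then wtp p (f i).1 * x ^ (f i).1.card else 0) := by
    intro f
    rw [prod_ite_all, hPQ]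
    by_cases h : ∀ i, Q (f i)
    · rw [if_pos h, if_pos (fun i _ => h i), wtp_graftT, card_graftT, pow_add, pow_one,
        Finset.prod_mul_distrib, ← Finset.prod_pow_eq_pow_sum]
      ring
    · rw [if_neg h, if_neg (fun hh => h fun i => hh i (Finset.mem_univ i)), mul_zero]
  calc ∑' f : Fin m → TreeT, (if P (graftT m f) then _ else 0)
      = ∑' f : Fin m → TreeT, x * p m * ∏ i : Fin m,
          (if Q (f i) then wtp p (f i).1 * x ^ (f i).1.card else 0) := tsum_congr hterm
    _ = x * p m * ∑' f : Fin m → TreeT, ∏ i : Fin m,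
          (if Q (f i) then wtp p (f i).1 * x ^ (f i).1.card else 0) := ENNReal.tsum_mul_left
    _ = x * (p m * (∑' t : TreeT, if Q t then wtp p t.1 * x ^ t.1.card else 0) ^ m) := by
        rw [tsum_pi_pow (fun t : TreeT => if Q t then wtp p t.1 * x ^ t.1.card else 0) m]
        ring

/-! ### The `d·Poi(lam)` offspring distribution -/

section Series

variable (d : ℕ) (lam : ℝ)

noncomputable def pE (m : ℕ) : ℝ≥0∞ := ENNReal.ofReal (dPoiPMF d lam m)

lemma dPoiPMF_nonneg (m : ℕ) (hlam : 0 ≤ lam) : 0 ≤ dPoiPMF d lam m := by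
  unfold dPoiPMF
  split
  · positivity
  · exact le_refl 0

lemma tsum_pE_pow (hd : 1 ≤ d) (hlam : 0 < lam) (r : ℝ) (h0 : 0 ≤ r) :
    (∑' m : ℕ, pE d lam m * (ENNReal.ofReal r) ^ m)
      = ENNReal.ofReal (Real.exp (lam * (r ^ d - 1))) := by
  have hd0 : d ≠ 0 := by omega
  have hterm : ∀ m : ℕ, pE d lam m * (ENNReal.ofReal r) ^ m
      = ENNReal.ofReal (dPoiPMF d lam m * r ^ m) := by
    intro m
    rw [pE, ← ENNReal.ofReal_pow h0, ← ENNReal.ofReal_mul (dPoiPMF_nonneg d lam m hlam.le)]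
  rw [tsum_congr hterm]
  have hinj : Function.Injective (fun j : ℕ => d * j) := fun a b h => by
    simpa [Nat.mul_left_cancel_iff (by omega : 0 < d)] using h
  have hsupp : Function.support (fun m => ENNReal.ofReal (dPoiPMF d lam m * r ^ m))
      ⊆ Set.range (fun j : ℕ => d * j) := by
    intro m hm
    rw [Function.mem_support] at hm
    by_contra hr
    apply hm
    show ENNReal.ofReal (dPoiPMF d lam m * r ^ m) = 0
    have hdvd : ¬ d ∣ m := fun ⟨j, hj⟩ => hr ⟨j, hj.symm⟩
    rw [dPoiPMF, if_neg hdvd, zero_mul, ENNReal.ofReal_zero]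
  rw [← hinj.tsum_eq hsupp]
  have hterm2 : ∀ j : ℕ, ENNReal.ofReal (dPoiPMF d lam (d * j) * r ^ (d * j))
      = ENNReal.ofReal (Real.exp (-lam) * (lam * r ^ d) ^ j / j.factorial) := by
    intro j
    congr 1
    rw [show dPoiPMF d lam (d * j)
        = Real.exp (-lam) * lam ^ j / (Nat.factorial j) from by
      rw [dPoiPMF, if_pos ⟨j, rfl⟩, Nat.mul_div_cancel_left j (by omega)]]
    rw [pow_mul', mul_pow]
    ring
  rw [tsum_congr hterm2]
  have hsum : Summable (fun j : ℕ => Real.exp (-lam) * (lam * r ^ d) ^ j / j.factorial) := by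
    have := Real.summable_pow_div_factorial (lam * r ^ d)
    simpa [mul_div_assoc] using this.mul_left (Real.exp (-lam))
  rw [← ENNReal.ofReal_tsum_of_nonneg (fun j => by positivity) hsum]
  congr 1
  have : (∑' j : ℕ, Real.exp (-lam) * (lam * r ^ d) ^ j / j.factorial)
      = Real.exp (-lam) * ∑' j : ℕ, (lam * r ^ d) ^ j / j.factorial := by
    rw [← tsum_mul_left]
    exact tsum_congr fun j => by ring
  rw [this, show (∑' j : ℕ, (lam * r ^ d) ^ j / j.factorial) = Real.exp (lam * r ^ d) from by
    rw [Real.exp_eq_exp_ℝ, NormedSpace.exp_eq_tsum_div], ← Real.exp_add]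
  ring_nf

lemma tsum_pE_one (hd : 1 ≤ d) (hlam : 0 < lam) : (∑' m : ℕ, pE d lam m) = 1 := by
  have := tsum_pE_pow d lam hd hlam 1 zero_le_one
  simp only [ENNReal.ofReal_one, one_pow, mul_one] at this
  rw [this]
  norm_num

end Series

/-! ### Depth truncation -/

def DepthLT (n : ℕ) (t : TreeT) : Prop := ∀ l ∈ t.1, l.length < n

lemma depthLT_graftT (n m : ℕ) (f : Fin m → TreeT) :
    DepthLT (n + 1) (graftT m f) ↔ ∀ i, DepthLT n (f i) := by
  constructor
  · intro h i x hx
    have hx' : x ++ [(i : ℕ)] ∈ (graftT m f).1 := by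
      refine mem_graft.2 (Or.inr ⟨i, i.2, x, ?_, rfl⟩)
      rw [dif_pos i.2]
      simpa [Fin.eta] using hx
    have := h _ hx'
    simpa using this
  · intro h l hl
    rcases mem_graft.1 hl with rfl | ⟨j, hj, x, hx, rfl⟩
    · simp
    · rw [dif_pos hj] at hx
      have := h ⟨j, hj⟩ x hx
      simp only [List.length_append, List.length_cons, List.length_nil]
      omega

lemma exists_depthLT (t : TreeT) : ∃ n, DepthLT n t :=
  ⟨(t.1.sup List.length) + 1, fun l hl => Nat.lt_succ_of_le (Finset.le_sup hl)⟩

section Gen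

variable (d : ℕ) (lam : ℝ)

noncomputable def WE (x : ℝ≥0∞) : ℝ≥0∞ :=
  ∑' t : TreeT, wtp (pE d lam) t.1 * x ^ t.1.card

noncomputable def Sd (n : ℕ) : ℝ≥0∞ :=
  ∑' t : TreeT, if DepthLT n t then wtp (pE d lam) t.1 else 0

lemma W_eq (x : ℝ≥0∞) : WE d lam x = x * ∑' m : ℕ, pE d lam m * (WE d lam x) ^ m := by
  have h := tsum_decomp (pE d lam) x (fun _ => True) (fun _ => True)
    (by intro m f; simp)
  simpa [WE] using h

lemma Sd_zero : Sd d lam 0 = 0 := by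
  rw [Sd]
  convert tsum_zero with t
  rw [if_neg]
  intro h
  exact absurd (h [] t.2.1) (by simp)

lemma Sd_succ (n : ℕ) : Sd d lam (n + 1) = ∑' m : ℕ, pE d lam m * (Sd d lam n) ^ m := by
  have h := tsum_decomp (pE d lam) 1 (DepthLT (n + 1)) (DepthLT n) (depthLT_graftT n)
  simpa [Sd] using h

lemma Sd_le_W1 (n : ℕ) : Sd d lam n ≤ WE d lam 1 := by
  refine ENNReal.tsum_le_tsum fun t => ?_
  rw [one_pow, mul_one]
  split
  · exact le_rfl
  · exact zero_le

lemma W1_eq_iSup : WE d lam 1 = ⨆ n, Sd d lam n := by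
  refine le_antisymm ?_ (iSup_le fun n => Sd_le_W1 d lam n)
  rw [WE]
  have : ∀ t : TreeT, wtp (pE d lam) t.1 * (1 : ℝ≥0∞) ^ t.1.card = wtp (pE d lam) t.1 := by
    intro t; rw [one_pow, mul_one]
  rw [tsum_congr this, ENNReal.tsum_eq_iSup_sum]
  refine iSup_le fun s => ?_
  obtain ⟨n, hn⟩ : ∃ n, ∀ t ∈ s, DepthLT n t := by
    refine ⟨(s.sup fun t => (t.1.sup List.length) + 1), fun t ht l hl => ?_⟩
    refine lt_of_lt_of_le (Nat.lt_succ_of_le (Finset.le_sup hl))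
      (Finset.le_sup (f := fun t : TreeT => (t.1.sup List.length) + 1) ht)
  refine le_trans ?_ (le_iSup _ n)
  rw [show (∑ t ∈ s, wtp (pE d lam) t.1)
      = ∑ t ∈ s, (if DepthLT n t then wtp (pE d lam) t.1 else 0) from
    Finset.sum_congr rfl fun t ht => (if_pos (hn t ht)).symm]
  exact ENNReal.sum_le_tsum s

lemma Sd_le_fixed (hd : 1 ≤ d) (hlam : 0 < lam) (γ' : ℝ) (h0 : 0 ≤ γ')
    (hfix : γ' = Real.exp (lam * (γ' ^ d - 1))) :
    ∀ n, Sd d lam n ≤ ENNReal.ofReal γ' := by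
  intro n
  induction n with
  | zero => rw [Sd_zero]; exact zero_le
  | succ n ih =>
    rw [Sd_succ]
    calc (∑' m : ℕ, pE d lam m * (Sd d lam n) ^ m)
        ≤ ∑' m : ℕ, pE d lam m * (ENNReal.ofReal γ') ^ m :=
          ENNReal.tsum_le_tsum fun m =>
            mul_le_mul_right (pow_le_pow_left' ih m) _
      _ = ENNReal.ofReal (Real.exp (lam * (γ' ^ d - 1))) := tsum_pE_pow d lam hd hlam γ' h0
      _ = ENNReal.ofReal γ' := by rw [← hfix]

end Gen

/-! ### Measure theory of the exploration events -/

section Meas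

variable {Ω : Type*} [MeasurableSpace Ω] (μ : Measure Ω) [IsProbabilityMeasure μ]
variable (N : Ω → List ℕ → ℕ)

def Ev (t : Finset (List ℕ)) : Set Ω := {ω | ∀ l ∈ t, N ω l = nchild t l}

lemma gwTree_eq_of_mem_Ev {t : Finset (List ℕ)} (ht : IsTree t) {ω : Ω}
    (hω : ω ∈ Ev N t) : gwTree (N ω) = ↑t := by
  ext l
  show nodePresent 1 (N ω) l ↔ _
  induction l with
  | nil =>
    show True ↔ _
    exact iff_of_true trivial (Finset.mem_coe.2 ht.1)
  | cons c l ih =>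
    show (nodePresent 1 (N ω) l ∧ c < 1 * N ω l) ↔ _
    rw [one_mul]
    by_cases hl : l ∈ t
    · rw [hω l hl]
      constructor
      · rintro ⟨-, hc⟩
        exact Finset.mem_coe.2 ((ht.2 c l).2 ⟨hl, hc⟩)
      · intro h
        exact ⟨ih.2 (Finset.mem_coe.2 hl), ((ht.2 c l).1 (Finset.mem_coe.1 h)).2⟩
    · constructor
      · rintro ⟨hp, -⟩
        exact absurd (Finset.mem_coe.1 (ih.1 hp)) hl
      · intro h
        exact absurd ((ht.2 c l).1 (Finset.mem_coe.1 h)).1 hl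

lemma Ev_disjoint {t t' : TreeT} (h : t ≠ t') : Disjoint (Ev N t.1) (Ev N t'.1) := by
  rw [Set.disjoint_left]
  intro ω hω hω'
  apply h
  apply Subtype.ext
  apply Finset.coe_injective
  rw [← gwTree_eq_of_mem_Ev N t.2 hω, ← gwTree_eq_of_mem_Ev N t'.2 hω']

lemma finite_eq_iUnion : {ω | (gwTree (N ω)).Finite} = ⋃ t : TreeT, Ev N t.1 := by
  ext ω
  constructor
  · intro hfin
    classical
    set t0 : Finset (List ℕ) := hfin.toFinset with ht0
    have hmem : ∀ l, l ∈ t0 ↔ nodePresent 1 (N ω) l := by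
      intro l
      rw [ht0, Set.Finite.mem_toFinset]
      rfl
    have hch : ∀ l, nodePresent 1 (N ω) l → nchild t0 l = N ω l := by
      intro l hl
      have : childIdx t0 l = Finset.range (N ω l) := by
        ext c
        rw [mem_childIdx, hmem, Finset.mem_range]
        show (nodePresent 1 (N ω) l ∧ c < 1 * N ω l) ↔ _
        rw [one_mul]
        exact ⟨fun h => h.2, fun h => ⟨hl, h⟩⟩
      rw [nchild, this, Finset.card_range]
    have htree : IsTree t0 := by
      constructor
      · rw [hmem]; trivial
      · intro c l
        rw [hmem]
        show (nodePresent 1 (N ω) l ∧ c < 1 * N ω l) ↔ _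
        rw [one_mul]
        by_cases hl : nodePresent 1 (N ω) l
        · rw [hch l hl]
          exact ⟨fun h => ⟨(hmem l).2 h.1, h.2⟩, fun h => ⟨hl, h.2⟩⟩
        · constructor
          · rintro ⟨h, -⟩; exact absurd h hl
          · rintro ⟨h, -⟩; exact absurd ((hmem l).1 h) hl
    refine Set.mem_iUnion.2 ⟨⟨t0, htree⟩, fun l hl => ?_⟩
    exact (hch l ((hmem l).1 hl)).symm
  · intro h
    obtain ⟨t, ht⟩ := Set.mem_iUnion.1 h
    show (gwTree (N ω)).Finite
    rw [gwTree_eq_of_mem_Ev N t.2 ht]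
    exact t.1.finite_toSet

variable (d : ℕ) (lam : ℝ)

def HIID : Prop := ∀ (s : Finset (List ℕ)) (κ : List ℕ → ℕ),
  (μ {ω | ∀ l ∈ s, N ω l = κ l}).toReal = ∏ l ∈ s, dPoiPMF d lam (κ l)

lemma measure_cyl (hlam : 0 < lam) (hiid : HIID μ N d lam)
    (s : Finset (List ℕ)) (κ : List ℕ → ℕ) :
    μ {ω | ∀ l ∈ s, N ω l = κ l} = ∏ l ∈ s, pE d lam (κ l) := by
  have hfin : μ {ω | ∀ l ∈ s, N ω l = κ l} ≠ ⊤ := measure_ne_top μ _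
  rw [← ENNReal.ofReal_toReal hfin, hiid s κ,
    ENNReal.ofReal_prod_of_nonneg (fun l _ => dPoiPMF_nonneg d lam _ hlam.le)]
  exact Finset.prod_congr rfl fun l _ => rfl

lemma measure_Ev (hlam : 0 < lam) (hiid : HIID μ N d lam) (t : Finset (List ℕ)) :
    μ (Ev N t) = wtp (pE d lam) t :=
  measure_cyl μ N d lam hlam hiid t (nchild t)

lemma null_of_add_compl_le {A : Set Ω} (h : μ A + μ Aᶜ ≤ 1) :
    NullMeasurableSet A μ := by
  set B := toMeasurable μ A with hB
  set B' := toMeasurable μ Aᶜ with hB'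
  have hU : B ∪ B' = Set.univ := by
    apply Set.eq_univ_of_univ_subset
    intro x _
    by_cases hx : x ∈ A
    · exact Or.inl (subset_toMeasurable μ A hx)
    · exact Or.inr (subset_toMeasurable μ Aᶜ hx)
  have hsum : μ (B ∪ B') + μ (B ∩ B') = μ B + μ B' :=
    measure_union_add_inter B (measurableSet_toMeasurable μ Aᶜ)
  rw [hU, measure_univ, measure_toMeasurable, measure_toMeasurable] at hsum
  have hnull : μ (B ∩ B') = 0 := by
    have h1 : (1 : ℝ≥0∞) + μ (B ∩ B') ≤ 1 + 0 := by
      rw [add_zero, hsum]; exact h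
    exact le_zero_iff.1 ((ENNReal.add_le_add_iff_left ENNReal.one_ne_top).1 h1)
  have hBA : μ (B \ A) = 0 := by
    refine measure_mono_null ?_ hnull
    intro x hx
    exact ⟨hx.1, subset_toMeasurable μ Aᶜ hx.2⟩
  refine ((measurableSet_toMeasurable μ A).nullMeasurableSet).congr ?_
  rw [MeasureTheory.ae_eq_set]
  constructor
  · exact hBA
  · rw [Set.diff_eq_empty.2 (subset_toMeasurable μ A)]
    exact measure_empty

lemma tsum_pi_fintype {ι : Type*} [Fintype ι] {α : Type*} (g : α → ℝ≥0∞) :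
    (∑' v : ι → α, ∏ i, g (v i)) = (∑' a, g a) ^ (Fintype.card ι) := by
  classical
  let e := Fintype.equivFin ι
  let E : (ι → α) ≃ (Fin (Fintype.card ι) → α) := Equiv.arrowCongr e (Equiv.refl α)
  rw [← tsum_pi_pow g (Fintype.card ι), ← E.symm.tsum_eq (fun v : ι → α => ∏ i, g (v i))]
  refine tsum_congr fun w => ?_
  have hew : ∀ i : ι, (E.symm w) i = w (e i) := fun i => rfl
  calc (∏ i, g (E.symm w i)) = ∏ i, g (w (e i)) :=
        Finset.prod_congr rfl fun i _ => by rw [hew]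
    _ = ∏ j, g (w j) := Equiv.prod_comp e (fun j => g (w j))

def Cyl' (s : Finset (List ℕ)) (v : ↥s → ℕ) : Set Ω :=
  {ω | ∀ l : ↥s, N ω (l : List ℕ) = v l}

lemma measure_Cyl' (hlam : 0 < lam) (hiid : HIID μ N d lam)
    (s : Finset (List ℕ)) (v : ↥s → ℕ) :
    μ (Cyl' N s v) = ∏ l : ↥s, pE d lam (v l) := by
  classical
  set vext : List ℕ → ℕ := fun l => if h : l ∈ s then v ⟨l, h⟩ else 0 with hvext
  have hset : Cyl' N s v = {ω | ∀ l ∈ s, N ω l = vext l} := by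
    ext ω
    constructor
    · intro h l hl
      rw [hvext]
      dsimp only
      rw [dif_pos hl]
      exact h ⟨l, hl⟩
    · intro h l
      have h2 : N ω l.1 = vext l.1 := h l.1 l.2
      rw [hvext] at h2
      dsimp only at h2
      rwa [dif_pos l.2] at h2
  rw [hset, measure_cyl μ N d lam hlam hiid s vext,
    ← Finset.prod_coe_sort s (fun l => pE d lam (vext l))]
  exact Finset.prod_congr rfl fun l _ => by rw [hvext]; dsimp only; rw [dif_pos l.2]

lemma tsum_measure_Cyl' (hd : 1 ≤ d) (hlam : 0 < lam) (hiid : HIID μ N d lam)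
    (s : Finset (List ℕ)) :
    (∑' v : ↥s → ℕ, μ (Cyl' N s v)) = 1 := by
  rw [tsum_congr (fun v => measure_Cyl' μ N d lam hlam hiid s v), tsum_pi_fintype,
    tsum_pE_one d lam hd hlam, one_pow]

lemma nullMeasurable_cyl (hd : 1 ≤ d) (hlam : 0 < lam) (hiid : HIID μ N d lam)
    (s : Finset (List ℕ)) (κ : List ℕ → ℕ) :
    NullMeasurableSet {ω | ∀ l ∈ s, N ω l = κ l} μ := by
  classical
  apply null_of_add_compl_le
  set κ0 : ↥s → ℕ := fun l => κ l.1 with hκ0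
  set A := {ω : Ω | ∀ l ∈ s, N ω l = κ l} with hA
  have hAeq : A = Cyl' N s κ0 := by
    ext ω
    constructor
    · intro h l; exact h l.1 l.2
    · intro h l hl; exact h ⟨l, hl⟩
  have hsub : Aᶜ ⊆ ⋃ v : ↥s → ℕ, (if v = κ0 then ∅ else Cyl' N s v) := by
    intro ω hω
    rw [hA, Set.mem_compl_iff, Set.mem_setOf_eq] at hω
    push_neg at hω
    obtain ⟨l, hl, hne⟩ := hω
    have hvne : (fun m : ↥s => N ω m.1) ≠ κ0 := fun heq => hne (congrFun heq ⟨l, hl⟩)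
    refine Set.mem_iUnion.2 ⟨fun m => N ω m.1, ?_⟩
    rw [if_neg hvne]
    exact fun m => rfl
  calc μ A + μ Aᶜ
      ≤ μ (Cyl' N s κ0) + ∑' v : ↥s → ℕ, μ (if v = κ0 then ∅ else Cyl' N s v) :=
        add_le_add (le_of_eq (by rw [hAeq]))
          (le_trans (measure_mono hsub) (measure_iUnion_le _))
    _ = μ (Cyl' N s κ0) + ∑' v : ↥s → ℕ, (if v = κ0 then 0 else μ (Cyl' N s v)) := by
        congr 1
        refine tsum_congr fun v => ?_
        split
        · exact measure_empty
        · rfl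
    _ = ∑' v : ↥s → ℕ, μ (Cyl' N s v) := by
        rw [ENNReal.tsum_eq_add_tsum_ite (f := fun v : ↥s → ℕ => μ (Cyl' N s v)) κ0]
        congr 1
        refine tsum_congr fun v => ?_
        by_cases hv : v = κ0
        · rw [if_pos hv, if_pos hv]
        · rw [if_neg hv, if_neg hv]
    _ = 1 := tsum_measure_Cyl' μ N d lam hd hlam hiid s

lemma nullMeasurable_Ev (hd : 1 ≤ d) (hlam : 0 < lam) (hiid : HIID μ N d lam)
    (t : Finset (List ℕ)) : NullMeasurableSet (Ev N t) μ :=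
  nullMeasurable_cyl μ N d lam hd hlam hiid t (nchild t)

lemma measure_finite_eq (hd : 1 ≤ d) (hlam : 0 < lam) (hiid : HIID μ N d lam) :
    μ {ω | (gwTree (N ω)).Finite} = WE d lam 1 := by
  rw [finite_eq_iUnion N]
  have hpair : Pairwise (Function.onFun (MeasureTheory.AEDisjoint μ) fun t : TreeT => Ev N t.1) := by
    intro t t' h
    show μ _ = 0
    rw [Set.disjoint_iff_inter_eq_empty.1 (Ev_disjoint N h), measure_empty]
  rw [measure_iUnion₀ hpair (fun t => nullMeasurable_Ev μ N d lam hd hlam hiid t.1), WE]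
  exact tsum_congr fun t => by
    rw [measure_Ev μ N d lam hlam hiid t.1, one_pow, mul_one]

/-- The key integral computation. -/
lemma integral_key (hd : 1 ≤ d) (hlam : 0 < lam) (hiid : HIID μ N d lam)
    (val : ℕ → ℝ) (h0 : ∀ n, 0 ≤ val n) (h1 : ∀ n, val n ≤ 1) :
    (∫ ω, (if (gwTree (N ω)).Finite then val (gwTree (N ω)).ncard else 0) ∂μ)
      = (∑' t : TreeT, ENNReal.ofReal (val t.1.card) * wtp (pE d lam) t.1).toReal := by
  classical
  set f : Ω → ℝ := fun ω => if (gwTree (N ω)).Finite then val (gwTree (N ω)).ncard else 0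
    with hf
  set B : TreeT → Set Ω := fun t => toMeasurable μ (Ev N t.1) with hBdef
  have hBmeas : ∀ t, MeasurableSet (B t) := fun t => measurableSet_toMeasurable μ _
  set F : Ω → ℝ≥0∞ := fun ω =>
    ∑' t : TreeT, (B t).indicator (fun _ => ENNReal.ofReal (val t.1.card)) ω with hFdef
  have hFmeas : Measurable F :=
    Measurable.ennreal_tsum fun t => measurable_const.indicator (hBmeas t)
  have hgood : ∀ᵐ ω ∂μ, ∀ t : TreeT, ω ∈ B t → ω ∈ Ev N t.1 := by
    rw [MeasureTheory.ae_all_iff]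
    intro t
    have hn : μ (B t \ Ev N t.1) = 0 := by
      rw [measure_diff (subset_toMeasurable μ _)
        (nullMeasurable_Ev μ N d lam hd hlam hiid t.1) (measure_ne_top μ _),
        measure_toMeasurable, tsub_self]
    rw [MeasureTheory.ae_iff]
    refine measure_mono_null (fun ω hω => ?_) hn
    simp only [Set.mem_setOf_eq, Classical.not_imp] at hω
    exact ⟨hω.1, hω.2⟩
  have hptwise : ∀ ω, (∀ t : TreeT, ω ∈ B t → ω ∈ Ev N t.1) →
      F ω = ENNReal.ofReal (f ω) ∧ F ω ≠ ⊤ := by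
    intro ω hω
    by_cases hfin : (gwTree (N ω)).Finite
    · obtain ⟨t0, ht0⟩ := Set.mem_iUnion.1 (by
        rw [← finite_eq_iUnion N]; exact hfin)
      have hFω : F ω = ENNReal.ofReal (val t0.1.card) := by
        rw [hFdef]
        dsimp only
        have hsingle : ∀ t : TreeT, t ≠ t0 →
            (B t).indicator (fun _ => ENNReal.ofReal (val t.1.card)) ω = 0 := by
          intro t ht
          refine Set.indicator_of_notMem (fun hB => ht ?_) _
          refine Subtype.ext (Finset.coe_injective ?_)
          rw [← gwTree_eq_of_mem_Ev N t.2 (hω t hB),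
            ← gwTree_eq_of_mem_Ev N t0.2 ht0]
        rw [tsum_eq_single t0 hsingle,
          Set.indicator_of_mem (subset_toMeasurable μ _ ht0)]
      have hcard : (gwTree (N ω)).ncard = t0.1.card := by
        rw [gwTree_eq_of_mem_Ev N t0.2 ht0, Set.ncard_coe_finset]
      rw [hf]
      dsimp only
      rw [if_pos hfin, hcard, hFω]
      exact ⟨rfl, ENNReal.ofReal_ne_top⟩
    · have hFω : F ω = 0 := by
        rw [hFdef]
        convert tsum_zero with t
        rw [Set.indicator_of_notMem]
        intro hB
        exact hfin (by
          rw [gwTree_eq_of_mem_Ev N t.2 (hω t hB)]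
          exact t.1.finite_toSet)
      rw [hf]
      dsimp only
      rw [if_neg hfin, hFω, ENNReal.ofReal_zero]
      exact ⟨rfl, by simp⟩
  have haeF : (fun ω => ENNReal.ofReal (f ω)) =ᵐ[μ] F := by
    filter_upwards [hgood] with ω hω
    exact (hptwise ω hω).1.symm
  have haef : f =ᵐ[μ] (fun ω => (F ω).toReal) := by
    filter_upwards [hgood] with ω hω
    rw [(hptwise ω hω).1, ENNReal.toReal_ofReal]
    by_cases hfin : (gwTree (N ω)).Finite
    · rw [hf]; dsimp only; rw [if_pos hfin]; exact h0 _
    · rw [hf]; dsimp only; rw [if_neg hfin]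
  have hmeasf : MeasureTheory.AEStronglyMeasurable f μ :=
    ((hFmeas.ennreal_toReal).aestronglyMeasurable).congr haef.symm
  have hnonneg : 0 ≤ᵐ[μ] f := by
    refine Filter.Eventually.of_forall fun ω => ?_
    rw [hf]
    dsimp only
    split
    · exact h0 _
    · exact le_refl 0
  rw [MeasureTheory.integral_eq_lintegral_of_nonneg_ae hnonneg hmeasf]
  rw [MeasureTheory.lintegral_congr_ae haeF]
  rw [hFdef]
  dsimp only
  rw [MeasureTheory.lintegral_tsum
    (fun t => (measurable_const.indicator (hBmeas t)).aemeasurable)]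
  congr 1
  refine tsum_congr fun t => ?_
  rw [MeasureTheory.lintegral_indicator (hBmeas t), MeasureTheory.setLIntegral_const,
    measure_toMeasurable, measure_Ev μ N d lam hlam hiid t.1]

end Meas

/-! ### Coefficients and real analysis -/

section Analysis

variable (d : ℕ) (lam : ℝ)

noncomputable def aE (n : ℕ) : ℝ≥0∞ :=
  ∑' t : TreeT, if t.1.card = n then wtp (pE d lam) t.1 else 0

lemma regroup (φ : ℕ → ℝ≥0∞) :
    (∑' t : TreeT, φ t.1.card * wtp (pE d lam) t.1) = ∑' n, φ n * aE d lam n := by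
  have h1 : ∀ n : ℕ, φ n * aE d lam n
      = ∑' t : TreeT, (if t.1.card = n then φ t.1.card * wtp (pE d lam) t.1 else 0) := by
    intro n
    rw [aE, ← ENNReal.tsum_mul_left]
    refine tsum_congr fun t => ?_
    by_cases h : t.1.card = n
    · rw [if_pos h, if_pos h, h]
    · rw [if_neg h, if_neg h, mul_zero]
  calc (∑' t : TreeT, φ t.1.card * wtp (pE d lam) t.1)
      = ∑' t : TreeT, ∑' n : ℕ,
          (if t.1.card = n then φ t.1.card * wtp (pE d lam) t.1 else 0) := by
        refine tsum_congr fun t => ?_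
        rw [tsum_eq_single t.1.card (fun n hn => if_neg (fun h => hn (by rw [← h])))]
        rw [if_pos rfl]
    _ = ∑' n : ℕ, ∑' t : TreeT,
          (if t.1.card = n then φ t.1.card * wtp (pE d lam) t.1 else 0) := ENNReal.tsum_comm
    _ = ∑' n, φ n * aE d lam n := (tsum_congr h1).symm

lemma WE_tsum (x : ℝ≥0∞) : WE d lam x = ∑' n, x ^ n * aE d lam n := by
  rw [WE, ← regroup d lam (fun n => x ^ n)]
  exact tsum_congr fun t => mul_comm _ _

lemma aE_zero : aE d lam 0 = 0 := by
  rw [aE]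
  convert tsum_zero with t
  rw [if_neg]
  intro h
  rw [Finset.card_eq_zero] at h
  exact absurd (h ▸ t.2.1) (Finset.notMem_empty [])

lemma WE_mono {x y : ℝ≥0∞} (hxy : x ≤ y) : WE d lam x ≤ WE d lam y :=
  ENNReal.tsum_le_tsum fun t => mul_le_mul_right (pow_le_pow_left' hxy _) _

noncomputable def ar (n : ℕ) : ℝ := (aE d lam n).toReal

noncomputable def gr (x : ℝ) : ℝ := ∑' n : ℕ, ar d lam (n + 1) * x ^ n

noncomputable def Gr (x : ℝ) : ℝ := x * gr d lam x

lemma ar_nonneg (n : ℕ) : 0 ≤ ar d lam n := ENNReal.toReal_nonneg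

section W1

variable (hW : WE d lam 1 ≤ 1)
include hW

lemma WE_one_tsum : WE d lam 1 = ∑' n, aE d lam n := by
  rw [WE_tsum]
  exact tsum_congr fun n => by rw [one_pow, one_mul]

lemma aE_ne_top (n : ℕ) : aE d lam n ≠ ⊤ := by
  refine ne_top_of_le_ne_top ENNReal.one_ne_top (le_trans ?_ hW)
  rw [WE_one_tsum d lam hW]
  exact ENNReal.le_tsum n

lemma summable_ar : Summable (ar d lam) := by
  refine ENNReal.summable_toReal ?_
  rw [← WE_one_tsum d lam hW]
  exact ne_top_of_le_ne_top ENNReal.one_ne_top hW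

lemma summable_ar1 : Summable (fun n => ar d lam (n + 1)) :=
  (summable_nat_add_iff 1).2 (summable_ar d lam hW)

lemma summable_arx {x : ℝ} (hx : x ∈ Set.Icc (0:ℝ) 1) :
    Summable (fun n => ar d lam n * x ^ n) := by
  refine Summable.of_nonneg_of_le
    (fun n => mul_nonneg (ar_nonneg d lam n) (pow_nonneg hx.1 n)) ?_
    (summable_ar d lam hW)
  intro n
  calc ar d lam n * x ^ n ≤ ar d lam n * 1 := by
        refine mul_le_mul_of_nonneg_left (pow_le_one₀ hx.1 hx.2) (ar_nonneg d lam n)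
    _ = ar d lam n := mul_one _

lemma gr_contOn : ContinuousOn (gr d lam) (Set.Icc (0:ℝ) 1) := by
  refine continuousOn_tsum (u := fun n => ar d lam (n + 1))
    (fun n => (continuous_const.mul (continuous_pow n)).continuousOn)
    (summable_ar1 d lam hW) (fun n x hx => ?_)
  rw [Real.norm_eq_abs, abs_of_nonneg (mul_nonneg (ar_nonneg d lam _) (pow_nonneg hx.1 n))]
  calc ar d lam (n + 1) * x ^ n ≤ ar d lam (n + 1) * 1 :=
        mul_le_mul_of_nonneg_left (pow_le_one₀ hx.1 hx.2) (ar_nonneg d lam _)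
    _ = ar d lam (n + 1) := mul_one _

lemma Gr_tsum {x : ℝ} (hx : x ∈ Set.Icc (0:ℝ) 1) :
    Gr d lam x = ∑' n, ar d lam n * x ^ n := by
  rw [Summable.tsum_eq_zero_add (summable_arx d lam hW hx)]
  rw [show ar d lam 0 = 0 from by rw [ar, aE_zero, ENNReal.toReal_zero], zero_mul, zero_add]
  rw [Gr, gr, ← tsum_mul_left]
  exact tsum_congr fun n => by rw [pow_succ']; ring

lemma WE_ofReal {x : ℝ} (hx : x ∈ Set.Icc (0:ℝ) 1) :
    WE d lam (ENNReal.ofReal x) = ENNReal.ofReal (Gr d lam x) ∧ Gr d lam x ≤ 1 := by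
  have hne : ∀ n : ℕ, (ENNReal.ofReal x) ^ n * aE d lam n ≠ ⊤ := by
    intro n
    refine ne_top_of_le_ne_top (aE_ne_top d lam hW n) ?_
    calc (ENNReal.ofReal x) ^ n * aE d lam n ≤ 1 ^ n * aE d lam n := by
          exact mul_le_mul_left (pow_le_pow_left' (ENNReal.ofReal_le_one.2 hx.2) n) _
      _ = aE d lam n := by rw [one_pow, one_mul]
  have hle : WE d lam (ENNReal.ofReal x) ≤ 1 :=
    le_trans (WE_mono d lam (ENNReal.ofReal_le_one.2 hx.2)) hW
  have htoReal : (WE d lam (ENNReal.ofReal x)).toReal = Gr d lam x := by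
    rw [WE_tsum, ENNReal.tsum_toReal_eq hne, Gr_tsum d lam hW hx]
    refine tsum_congr fun n => ?_
    rw [ENNReal.toReal_mul, ENNReal.toReal_pow, ENNReal.toReal_ofReal hx.1, ← ar, mul_comm]
  constructor
  · rw [← htoReal, ENNReal.ofReal_toReal (ne_top_of_le_ne_top ENNReal.one_ne_top hle)]
  · rw [← htoReal]
    calc (WE d lam (ENNReal.ofReal x)).toReal ≤ (1 : ℝ≥0∞).toReal :=
          ENNReal.toReal_mono ENNReal.one_ne_top hle
      _ = 1 := ENNReal.toReal_one

lemma Gr_nonneg {x : ℝ} (hx : x ∈ Set.Icc (0:ℝ) 1) : 0 ≤ Gr d lam x := by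
  rw [Gr_tsum d lam hW hx]
  exact tsum_nonneg fun n => mul_nonneg (ar_nonneg d lam n) (pow_nonneg hx.1 n)

lemma Gfe (hd : 1 ≤ d) (hlam : 0 < lam) {x : ℝ} (hx : x ∈ Set.Icc (0:ℝ) 1) :
    Gr d lam x = x * Real.exp (lam * (Gr d lam x ^ d - 1)) := by
  obtain ⟨hWeq, hle1⟩ := WE_ofReal d lam hW hx
  have h0 : 0 ≤ Gr d lam x := Gr_nonneg d lam hW hx
  have key : ENNReal.ofReal (Gr d lam x)
      = ENNReal.ofReal (x * Real.exp (lam * (Gr d lam x ^ d - 1))) := by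
    rw [← hWeq, W_eq, hWeq, tsum_pE_pow d lam hd hlam _ h0,
      ENNReal.ofReal_mul hx.1]
  have := congrArg ENNReal.toReal key
  rwa [ENNReal.toReal_ofReal h0,
    ENNReal.toReal_ofReal (mul_nonneg hx.1 (Real.exp_pos _).le)] at this

lemma Gr_one (hd : 1 ≤ d) (hlam : 0 < lam) : Gr d lam 1 = (WE d lam 1).toReal := by
  have := (WE_ofReal d lam hW (Set.mem_Icc.2 ⟨zero_le_one, le_refl 1⟩)).1
  rw [ENNReal.ofReal_one] at this
  rw [this, ENNReal.toReal_ofReal (Gr_nonneg d lam hW (by simp))]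

lemma gamma_fix (hd : 1 ≤ d) (hlam : 0 < lam) :
    Gr d lam 1 = Real.exp (lam * (Gr d lam 1 ^ d - 1)) := by
  have := Gfe d lam hW hd hlam (Set.mem_Icc.2 ⟨zero_le_one, le_refl 1⟩)
  rwa [one_mul] at this

lemma gamma_pos (hd : 1 ≤ d) (hlam : 0 < lam) : 0 < Gr d lam 1 := by
  rw [gamma_fix d lam hW hd hlam]
  exact Real.exp_pos _

lemma fixed_lb (hd : 1 ≤ d) (hlam : 0 < lam) (b : ℝ) (hb0 : 0 ≤ b)
    (hfix : b = Real.exp (lam * (b ^ d - 1))) : Gr d lam 1 ≤ b := by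
  rw [Gr_one d lam hW hd hlam]
  have h1 : WE d lam 1 ≤ ENNReal.ofReal b := by
    rw [W1_eq_iSup]
    exact iSup_le fun n => Sd_le_fixed d lam hd hlam b hb0 hfix n
  calc (WE d lam 1).toReal ≤ (ENNReal.ofReal b).toReal :=
        ENNReal.toReal_mono ENNReal.ofReal_ne_top h1
    _ = b := ENNReal.toReal_ofReal hb0

lemma gammaLam_eq (hd : 1 ≤ d) (hlam : 0 < lam) : gammaLam d lam = Gr d lam 1 := by
  have hmem : Gr d lam 1 ∈ {γ : ℝ | γ ∈ Set.Icc (0 : ℝ) 1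
      ∧ γ = Real.exp (-lam * (1 - γ ^ d))} := by
    constructor
    · exact ⟨Gr_nonneg d lam hW (by simp), (WE_ofReal d lam hW (by simp)).2⟩
    · rw [show -lam * (1 - Gr d lam 1 ^ d) = lam * (Gr d lam 1 ^ d - 1) from by ring]
      exact gamma_fix d lam hW hd hlam
  refine le_antisymm (csInf_le ⟨0, fun b hb => hb.1.1⟩ hmem) (le_csInf ⟨_, hmem⟩ ?_)
  rintro b ⟨hb1, hb2⟩
  refine fixed_lb d lam hW hd hlam b hb1.1 ?_
  rwa [show lam * (b ^ d - 1) = -lam * (1 - b ^ d) from by ring]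

end W1

end Analysis

/-! ### Derivatives and the integral of `gr` -/

section Deriv

variable (d : ℕ) (lam : ℝ)

section H

variable (hd : 1 ≤ d) (hlam : 0 < lam) (hW : WE d lam 1 ≤ 1)
include hd hlam hW

lemma gr_eq {x : ℝ} (hx : x ∈ Set.Ioc (0:ℝ) 1) :
    gr d lam x = Real.exp (lam * (Gr d lam x ^ d - 1)) := by
  have h := Gfe d lam hW hd hlam (Set.mem_Icc.2 ⟨hx.1.le, hx.2⟩)
  nth_rewrite 1 [Gr] at h
  exact mul_left_cancel₀ (ne_of_gt hx.1) h

lemma Gr_le_gamma {x : ℝ} (hx : x ∈ Set.Icc (0:ℝ) 1) :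
    Gr d lam x ≤ Gr d lam 1 := by
  have h1 : Gr d lam x = (WE d lam (ENNReal.ofReal x)).toReal := by
    rw [(WE_ofReal d lam hW hx).1, ENNReal.toReal_ofReal (Gr_nonneg d lam hW hx)]
  rw [h1, Gr_one d lam hW hd hlam]
  exact ENNReal.toReal_mono (ne_top_of_le_ne_top ENNReal.one_ne_top hW)
    (WE_mono d lam (ENNReal.ofReal_le_one.2 hx.2))

lemma Gr_lt_gamma {x : ℝ} (hx : x ∈ Set.Ico (0:ℝ) 1) :
    Gr d lam x < Gr d lam 1 := by
  have hγpos := gamma_pos d lam hW hd hlam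
  rcases eq_or_lt_of_le hx.1 with heq | hpos
  · rw [show x = 0 from heq.symm, Gr, zero_mul]
    exact hγpos
  · have hIcc : x ∈ Set.Icc (0:ℝ) 1 := ⟨hx.1, hx.2.le⟩
    have h := Gfe d lam hW hd hlam hIcc
    have hle : Real.exp (lam * (Gr d lam x ^ d - 1))
        ≤ Real.exp (lam * (Gr d lam 1 ^ d - 1)) := by
      refine Real.exp_le_exp.2 (mul_le_mul_of_nonneg_left ?_ hlam.le)
      have := pow_le_pow_left₀ (Gr_nonneg d lam hW hIcc)
        (Gr_le_gamma d lam hd hlam hW hIcc) d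
      linarith
    calc Gr d lam x = x * Real.exp (lam * (Gr d lam x ^ d - 1)) := h
      _ ≤ x * Real.exp (lam * (Gr d lam 1 ^ d - 1)) :=
          mul_le_mul_of_nonneg_left hle hpos.le
      _ = x * Gr d lam 1 := by rw [← gamma_fix d lam hW hd hlam]
      _ < Gr d lam 1 := mul_lt_of_lt_one_left hγpos hx.2

lemma crit_le_one : lam * d * (Gr d lam 1) ^ d ≤ 1 := by
  set γ := Gr d lam 1 with hγdef
  by_contra hk
  push_neg at hk
  set ψ : ℝ → ℝ := fun u => Real.exp (lam * (u ^ d - 1)) with hψ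
  have hψcont : Continuous ψ :=
    Real.continuous_exp.comp (continuous_const.mul ((continuous_pow d).sub continuous_const))
  have hfixγ : ψ γ = γ := (gamma_fix d lam hW hd hlam).symm
  have hγpos : 0 < γ := gamma_pos d lam hW hd hlam
  have hpow : γ * γ ^ (d - 1) = γ ^ d := by
    rw [← pow_succ']
    congr 1
    omega
  have hψd : HasDerivAt ψ (lam * d * γ ^ d) γ := by
    have h2 := (((hasDerivAt_pow d γ).sub_const 1).const_mul lam).exp
    have h3 : Real.exp (lam * (γ ^ d - 1)) = γ := (gamma_fix d lam hW hd hlam).symm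
    rw [hψ]
    convert h2 using 1
    rw [h3, ← hpow]
    ring
  have hχd : HasDerivAt (fun u => ψ u - u) (lam * d * γ ^ d - 1) γ :=
    hψd.sub (hasDerivAt_id γ)
  have hslope := hasDerivAt_iff_tendsto_slope.1 hχd
  have hmono : nhdsWithin γ (Set.Iio γ) ≤ nhdsWithin γ {γ}ᶜ :=
    nhdsWithin_mono γ (fun u hu => ne_of_lt hu)
  have E1 : ∀ᶠ u in nhdsWithin γ (Set.Iio γ), 0 < slope (fun u => ψ u - u) γ u :=
    (hslope.mono_left hmono).eventually (eventually_gt_nhds (by linarith))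
  have E2 : ∀ᶠ u in nhdsWithin γ (Set.Iio γ), 0 < u :=
    eventually_nhdsWithin_of_eventually_nhds (eventually_gt_nhds hγpos)
  have E3 : ∀ᶠ u in nhdsWithin γ (Set.Iio γ), u ∈ Set.Iio γ := eventually_mem_nhdsWithin
  obtain ⟨u, hu1, hu2, hu3⟩ := (E1.and (E2.and E3)).exists
  have huγ : u < γ := hu3
  have hχu : ψ u - u < 0 := by
    have hs : slope (fun u => ψ u - u) γ u = (ψ u - u) / (u - γ) := by
      rw [slope_def_field, hfixγ, sub_self, sub_zero]
    rw [hs] at hu1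
    rcases div_pos_iff.1 hu1 with ⟨h1, h2⟩ | ⟨h1, h2⟩
    · linarith
    · exact h1
  have hχcont : ContinuousOn (fun u => ψ u - u) (Set.Icc 0 u) :=
    (hψcont.sub continuous_id).continuousOn
  have h0pos : (0:ℝ) < ψ 0 - 0 := by
    rw [hψ, sub_zero]
    exact Real.exp_pos _
  have hmem : (0:ℝ) ∈ Set.Icc (ψ u - u) (ψ 0 - 0) := ⟨hχu.le, h0pos.le⟩
  obtain ⟨c, hc, hc0⟩ := intermediate_value_Icc' hu2.le hχcont hmem
  have hc0' : ψ c - c = 0 := hc0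
  have hcfix : c = Real.exp (lam * (c ^ d - 1)) := by
    have hcc : ψ c = c := by linarith
    exact hcc.symm
  have hγc : γ ≤ c := fixed_lb d lam hW hd hlam c hc.1 hcfix
  linarith [hc.2]

lemma hasDerivAt_Gr {x : ℝ} (hx : x ∈ Set.Ioo (0:ℝ) 1) :
    HasDerivAt (Gr d lam)
      (Real.exp (-lam * (Gr d lam x ^ d - 1)) * (1 - lam * d * Gr d lam x ^ d))⁻¹ x := by
  have hIcc : x ∈ Set.Icc (0:ℝ) 1 := ⟨hx.1.le, hx.2.le⟩
  set u₀ := Gr d lam x with hu₀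
  have hu₀0 : 0 ≤ u₀ := Gr_nonneg d lam hW hIcc
  have hpow : u₀ * u₀ ^ (d - 1) = u₀ ^ d := by
    rw [← pow_succ']
    congr 1
    omega
  have hΘd : HasDerivAt (fun u : ℝ => u * Real.exp (-lam * (u ^ d - 1)))
      (Real.exp (-lam * (u₀ ^ d - 1)) * (1 - lam * d * u₀ ^ d)) u₀ := by
    have h2 := (((hasDerivAt_pow d u₀).sub_const 1).const_mul (-lam)).exp
    have h3 := (hasDerivAt_id u₀).mul h2
    convert h3 using 1
    case e'_4 => rfl
    case e'_5 => rfl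
    case e'_8 => rfl
    rw [id_eq, ← hpow]
    ring
  have hGlt : u₀ < Gr d lam 1 := Gr_lt_gamma d lam hd hlam hW ⟨hx.1.le, hx.2⟩
  have hc_pos : 0 < 1 - lam * d * u₀ ^ d := by
    have hdpos : (0:ℝ) < lam * d :=
      mul_pos hlam (by exact_mod_cast Nat.pos_of_ne_zero (by omega))
    have h1 : lam * d * u₀ ^ d < lam * d * Gr d lam 1 ^ d :=
      mul_lt_mul_of_pos_left (pow_lt_pow_left₀ hGlt hu₀0 (by omega)) hdpos
    have h2 := crit_le_one d lam hd hlam hW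
    linarith
  have hΘ'ne : Real.exp (-lam * (u₀ ^ d - 1)) * (1 - lam * d * u₀ ^ d) ≠ 0 :=
    mul_ne_zero (Real.exp_ne_zero _) (ne_of_gt hc_pos)
  have hcont : ContinuousAt (Gr d lam) x :=
    ((continuous_id.continuousOn.mul (gr_contOn d lam hW))).continuousAt
      (Icc_mem_nhds hx.1 hx.2)
  have hloc : ∀ᶠ y in nhds x,
      (fun u : ℝ => u * Real.exp (-lam * (u ^ d - 1))) (Gr d lam y) = y := by
    filter_upwards [Icc_mem_nhds hx.1 hx.2] with y hy
    have hGfe := Gfe d lam hW hd hlam hy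
    show Gr d lam y * Real.exp (-lam * (Gr d lam y ^ d - 1)) = y
    nth_rewrite 1 [hGfe]
    rw [mul_assoc, ← Real.exp_add,
      show lam * (Gr d lam y ^ d - 1) + -lam * (Gr d lam y ^ d - 1) = 0 from by ring,
      Real.exp_zero, mul_one]
  exact HasDerivAt.of_local_left_inverse hcont hΘd hΘ'ne hloc

lemma hasDerivAt_FFGr {x : ℝ} (hx : x ∈ Set.Ioo (0:ℝ) 1) :
    HasDerivAt (fun y => Gr d lam y - lam * ((d:ℝ)/((d:ℝ)+1)) * Gr d lam y ^ (d+1))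
      (gr d lam x) x := by
  set u₀ := Gr d lam x with hu₀
  have hIcc : x ∈ Set.Icc (0:ℝ) 1 := ⟨hx.1.le, hx.2.le⟩
  have hu₀0 : 0 ≤ u₀ := Gr_nonneg d lam hW hIcc
  have hFF : HasDerivAt (fun u : ℝ => u - lam * ((d:ℝ)/((d:ℝ)+1)) * u ^ (d+1))
      (1 - lam * d * u₀ ^ d) u₀ := by
    have h1 := (hasDerivAt_pow (d+1) u₀).const_mul (lam * ((d:ℝ)/((d:ℝ)+1)))
    have h2 := (hasDerivAt_id u₀).sub h1
    convert h2 using 1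
    case e'_4 => rfl
    case e'_5 => rfl
    case e'_8 => rfl
    have hd1 : ((d:ℝ) + 1) ≠ 0 := by positivity
    rw [show d + 1 - 1 = d from by omega]
    push_cast
    field_simp
  have hGd := hasDerivAt_Gr d lam hd hlam hW hx
  have hcomp := hFF.comp x hGd
  have hc_pos : 0 < 1 - lam * d * u₀ ^ d := by
    have hGlt : u₀ < Gr d lam 1 := Gr_lt_gamma d lam hd hlam hW ⟨hx.1.le, hx.2⟩
    have hdpos : (0:ℝ) < lam * d :=
      mul_pos hlam (by exact_mod_cast Nat.pos_of_ne_zero (by omega))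
    have h1 : lam * d * u₀ ^ d < lam * d * Gr d lam 1 ^ d :=
      mul_lt_mul_of_pos_left (pow_lt_pow_left₀ hGlt hu₀0 (by omega)) hdpos
    have h2 := crit_le_one d lam hd hlam hW
    linarith
  have heq : (1 - lam * d * u₀ ^ d)
      * (Real.exp (-lam * (u₀ ^ d - 1)) * (1 - lam * d * u₀ ^ d))⁻¹
        = gr d lam x := by
    rw [gr_eq d lam hd hlam hW ⟨hx.1, hx.2.le⟩, ← hu₀]
    rw [show -lam * (u₀ ^ d - 1) = -(lam * (u₀ ^ d - 1)) from by ring, Real.exp_neg]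
    field_simp
  have := hcomp
  rw [heq] at this
  exact this

lemma integral_gr : (∫ y in (0:ℝ)..1, gr d lam y)
    = Gr d lam 1 - lam * ((d:ℝ)/((d:ℝ)+1)) * Gr d lam 1 ^ (d+1) := by
  have hGc : ContinuousOn (Gr d lam) (Set.Icc 0 1) :=
    continuous_id.continuousOn.mul (gr_contOn d lam hW)
  have hFFc : Continuous (fun u : ℝ => u - lam * ((d:ℝ)/((d:ℝ)+1)) * u ^ (d+1)) :=
    continuous_id.sub (continuous_const.mul (continuous_pow (d+1)))
  have hcomp_cont : ContinuousOn
      (fun y => Gr d lam y - lam * ((d:ℝ)/((d:ℝ)+1)) * Gr d lam y ^ (d+1))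
      (Set.Icc 0 1) := hFFc.comp_continuousOn hGc
  have hint : IntervalIntegrable (gr d lam) MeasureTheory.volume 0 1 := by
    refine ContinuousOn.intervalIntegrable ?_
    rw [Set.uIcc_of_le zero_le_one]
    exact gr_contOn d lam hW
  have h := intervalIntegral.integral_eq_sub_of_hasDerivAt_of_le zero_le_one hcomp_cont
    (fun x hx => hasDerivAt_FFGr d lam hd hlam hW hx) hint
  rw [h, show Gr d lam 0 = 0 from by rw [Gr, zero_mul]]
  rw [zero_pow (by omega : d + 1 ≠ 0)]
  ring

end H

end Deriv

/-! ### Term-by-term integration -/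

lemma one_div_nat_le_one (n : ℕ) : 1/(n:ℝ) ≤ 1 := by
  rcases Nat.eq_zero_or_pos n with rfl | h
  · norm_num
  · rw [div_le_one (by exact_mod_cast h)]
    exact_mod_cast h

section IntSeries

variable (d : ℕ) (lam : ℝ) (hW : WE d lam 1 ≤ 1)
include hW

lemma integral_Ioc_gr :
    (∫ y in Set.Ioc (0:ℝ) 1, gr d lam y)
      = ∑' n : ℕ, ar d lam (n+1) * (1/((n:ℝ)+1)) := by
  have hmeas : ∀ n : ℕ, MeasureTheory.AEStronglyMeasurable
      (fun y : ℝ => ar d lam (n+1) * y ^ n)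
      (MeasureTheory.volume.restrict (Set.Ioc (0:ℝ) 1)) :=
    fun n => (continuous_const.mul (continuous_pow n)).aestronglyMeasurable
  have hboundn : ∀ n : ℕ,
      (∫⁻ y in Set.Ioc (0:ℝ) 1, ↑‖ar d lam (n+1) * y ^ n‖₊)
        ≤ ENNReal.ofReal (ar d lam (n+1)) := by
    intro n
    calc (∫⁻ y in Set.Ioc (0:ℝ) 1, ↑‖ar d lam (n+1) * y ^ n‖₊)
        ≤ ∫⁻ _y in Set.Ioc (0:ℝ) 1, ENNReal.ofReal (ar d lam (n+1)) := by
          refine MeasureTheory.setLIntegral_mono measurable_const fun y hy => ?_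
          rw [← enorm_eq_nnnorm, Real.enorm_eq_ofReal (mul_nonneg (ar_nonneg d lam _) (pow_nonneg hy.1.le n))]
          refine ENNReal.ofReal_le_ofReal ?_
          calc ar d lam (n+1) * y ^ n ≤ ar d lam (n+1) * 1 :=
                mul_le_mul_of_nonneg_left (pow_le_one₀ hy.1.le hy.2) (ar_nonneg d lam _)
            _ = ar d lam (n+1) := mul_one _
      _ = ENNReal.ofReal (ar d lam (n+1)) := by
          rw [MeasureTheory.setLIntegral_const, Real.volume_Ioc]
          norm_num
  have hbound : (∑' n : ℕ, ∫⁻ y in Set.Ioc (0:ℝ) 1, ↑‖ar d lam (n+1) * y ^ n‖₊) ≠ ⊤ := by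
    refine ne_top_of_le_ne_top ENNReal.one_ne_top ?_
    calc (∑' n : ℕ, ∫⁻ y in Set.Ioc (0:ℝ) 1, ↑‖ar d lam (n+1) * y ^ n‖₊)
        ≤ ∑' n : ℕ, ENNReal.ofReal (ar d lam (n+1)) := ENNReal.tsum_le_tsum hboundn
      _ = ∑' n : ℕ, aE d lam (n+1) := tsum_congr fun n => by
          rw [ar, ENNReal.ofReal_toReal (aE_ne_top d lam hW _)]
      _ ≤ ∑' n : ℕ, aE d lam n :=
          ENNReal.tsum_comp_le_tsum_of_injective (fun a b h => by omega) _
      _ ≤ 1 := by rw [← WE_one_tsum d lam hW]; exact hW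
  have h := MeasureTheory.integral_tsum hmeas hbound
  rw [show (∫ y in Set.Ioc (0:ℝ) 1, gr d lam y)
      = ∫ y in Set.Ioc (0:ℝ) 1, ∑' n : ℕ, ar d lam (n+1) * y ^ n from rfl, h]
  refine tsum_congr fun n => ?_
  rw [← intervalIntegral.integral_of_le zero_le_one,
    intervalIntegral.integral_const_mul, integral_pow, one_pow,
    zero_pow (Nat.succ_ne_zero n), sub_zero]

lemma IE_toReal :
    (∑' n : ℕ, ENNReal.ofReal (1/(n:ℝ)) * aE d lam n).toReal
      = ∑' n : ℕ, ar d lam (n+1) * (1/((n:ℝ)+1)) := by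
  have hne : ∀ n : ℕ, ENNReal.ofReal (1/(n:ℝ)) * aE d lam n ≠ ⊤ := fun n =>
    ENNReal.mul_ne_top ENNReal.ofReal_ne_top (aE_ne_top d lam hW n)
  rw [ENNReal.tsum_toReal_eq hne]
  have hterm : ∀ n : ℕ, (ENNReal.ofReal (1/(n:ℝ)) * aE d lam n).toReal
      = (1/(n:ℝ)) * ar d lam n := by
    intro n
    rw [ENNReal.toReal_mul, ENNReal.toReal_ofReal (by positivity)]
    rfl
  rw [tsum_congr hterm]
  have hsum : Summable (fun n : ℕ => (1/(n:ℝ)) * ar d lam n) := by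
    refine Summable.of_nonneg_of_le
      (fun n => mul_nonneg (by positivity) (ar_nonneg d lam n))
      (fun n => ?_) (summable_ar d lam hW)
    exact mul_le_of_le_one_left (ar_nonneg d lam n) (one_div_nat_le_one n)
  rw [Summable.tsum_eq_zero_add hsum,
    show (1/((0:ℕ):ℝ)) * ar d lam 0 = 0 from by norm_num, zero_add]
  refine tsum_congr fun n => ?_
  push_cast
  ring

end IntSeries


end GW

/-- total progeny of the `d·Poi(lam)` branching process.
Let `C` be the total progeny of a Galton–Watson process with offspring
distribution `d · Poi(lam)` (realized by an i.i.d. family `N` of offspring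
numbers), with `1/C = 0` when `C = ∞`, and let
`γ = P(C < ∞)` be the extinction probability.  Then `γ` is the smallest
solution in `[0,1]` of `γ = exp(-lam (1 - γ^d))`,
`E[1/C] = γ - lam·(d/(d+1))·γ^{d+1}`, the restricted generating function
`G(z) = E[z^C · 1_{C<∞}]` satisfies `G(z) = z · exp(lam (G(z)^d - 1))` on
`[0,1]`, and `E[1/C] = ∫_0^1 G(t)/t dt`. -/
theorem gw_total_progeny_inverse_moment
    (d : ℕ) (hd : 1 ≤ d) (lam : ℝ) (hlam : 0 < lam)
    {Ω : Type*} [MeasurableSpace Ω] (μ : Measure Ω) [IsProbabilityMeasure μ]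
    (N : Ω → List ℕ → ℕ)
    (hiid : ∀ (s : Finset (List ℕ)) (κ : List ℕ → ℕ),
      (μ {ω | ∀ l ∈ s, N ω l = κ l}).toReal = ∏ l ∈ s, dPoiPMF d lam (κ l)) :
    (μ {ω | (gwTree (N ω)).Finite}).toReal = gammaLam d lam ∧
    (∫ ω, (if (gwTree (N ω)).Finite then
        1 / ((gwTree (N ω)).ncard : ℝ) else 0) ∂μ)
      = gammaLam d lam -
          lam * ((d : ℝ) / ((d : ℝ) + 1)) * gammaLam d lam ^ (d + 1) ∧
    (∀ z ∈ Set.Icc (0 : ℝ) 1,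
      gwGen μ N z = z * Real.exp (lam * (gwGen μ N z ^ d - 1))) ∧
    (∫ ω, (if (gwTree (N ω)).Finite then
        1 / ((gwTree (N ω)).ncard : ℝ) else 0) ∂μ)
      = ∫ t in (0 : ℝ)..1, gwGen μ N t / t := by
  classical
  have hiid' : GW.HIID μ N d lam := hiid
  have hWle : GW.WE d lam 1 ≤ 1 := by
    rw [← GW.measure_finite_eq μ N d lam hd hlam hiid']
    exact prob_le_one
  have hgamma : gammaLam d lam = GW.Gr d lam 1 :=
    GW.gammaLam_eq d lam hWle hd hlam
  have hmeasγ : (μ {ω | (gwTree (N ω)).Finite}).toReal = gammaLam d lam := by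
    rw [GW.measure_finite_eq μ N d lam hd hlam hiid', hgamma]
    exact (GW.Gr_one d lam hWle hd hlam).symm
  have hE : (∫ ω, (if (gwTree (N ω)).Finite then
        1 / ((gwTree (N ω)).ncard : ℝ) else 0) ∂μ)
      = (∑' n : ℕ, ENNReal.ofReal (1/(n:ℝ)) * GW.aE d lam n).toReal := by
    have hkey := GW.integral_key μ N d lam hd hlam hiid' (fun n => 1/(n:ℝ))
      (fun n => by positivity) (fun n => GW.one_div_nat_le_one n)
    rw [hkey]
    congr 1
    exact GW.regroup d lam (fun n => ENNReal.ofReal (1/(n:ℝ)))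
  have hEint : (∑' n : ℕ, ENNReal.ofReal (1/(n:ℝ)) * GW.aE d lam n).toReal
      = ∫ y in (0:ℝ)..1, GW.gr d lam y := by
    rw [GW.IE_toReal d lam hWle, ← GW.integral_Ioc_gr d lam hWle,
      intervalIntegral.integral_of_le zero_le_one]
  have hgen : ∀ z ∈ Set.Icc (0:ℝ) 1, gwGen μ N z = GW.Gr d lam z := by
    intro z hz
    have hkey := GW.integral_key μ N d lam hd hlam hiid' (fun n => z ^ n)
      (fun n => pow_nonneg hz.1 n) (fun n => pow_le_one₀ hz.1 hz.2)
    rw [gwGen, hkey]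
    have heq : (∑' t : GW.TreeT, ENNReal.ofReal (z ^ t.1.card) * GW.wtp (GW.pE d lam) t.1)
        = GW.WE d lam (ENNReal.ofReal z) := by
      rw [GW.WE_tsum, ← GW.regroup d lam (fun n => ENNReal.ofReal z ^ n)]
      refine tsum_congr fun t => ?_
      rw [ENNReal.ofReal_pow hz.1]
    rw [heq, (GW.WE_ofReal d lam hWle hz).1,
      ENNReal.toReal_ofReal (GW.Gr_nonneg d lam hWle hz)]
  refine ⟨hmeasγ, ?_, ?_, ?_⟩
  · rw [hE, hEint, GW.integral_gr d lam hd hlam hWle, hgamma]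
  · intro z hz
    rw [hgen z hz]
    exact GW.Gfe d lam hWle hd hlam hz
  · rw [hE, hEint, intervalIntegral.integral_of_le zero_le_one,
      intervalIntegral.integral_of_le zero_le_one]
    refine MeasureTheory.setIntegral_congr_fun measurableSet_Ioc fun y hy => ?_
    show GW.gr d lam y = gwGen μ N y / y
    rw [hgen y ⟨hy.1.le, hy.2⟩, GW.Gr, mul_div_cancel_left₀ _ (ne_of_gt hy.1)]

end RSC
end
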